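/- arXiv:1902.02213 — 4 statements merged into one kernel-verified Lean document; each statement's English description precedes it below -/
import Mathlib

section
/- Let π ∈ S_n and let Γ(π) = (d,l). Then π avoids both vincular patterns 1-3̲2̲ and 1-2̲3̲ if and only if the bicolored Motzkin path d has no horizontal steps of color c₂ and, for every index i, l_i > 0 implies that d_i is a down step. -/
open scoped Classical

noncomputable section

/-- Steps of a Motzkin path: up, down, horizontal. -/
inductive Step : Type
  | U : Step
  | D : Step
  | H : Step
  deriving DecidableEq

/-- Steps of a bicolored Motzkin path: up, down, horizontal of color `c₁`,
horizontal of color `c₂`. -/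
inductive CStep : Type
  | U : CStep
  | D : CStep
  | H : CStep
  | Ht : CStep
  deriving DecidableEq

/-- A word over `{U,D,H}` is a Motzkin word if the numbers of `U`'s and `D`'s agree
and every prefix has at least as many `U`'s as `D`'s. -/
def IsMotzkin (w : List Step) : Prop :=
  w.count Step.U = w.count Step.D ∧
  ∀ k, (w.take k).count Step.D ≤ (w.take k).count Step.U

/-- The `y`-coordinate of the lattice point reached after the first `i` steps. -/
def levelAt (w : List Step) (i : ℕ) : ℕ :=
  (w.take i).count Step.U - (w.take i).count Step.D

/-- The height of the `i`-th step (0-indexed): the `y`-coordinate of its ending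
point for a down step, of its starting point otherwise. -/
def heightAt (w : List Step) (i : ℕ) : ℕ :=
  if w.getD i Step.H = Step.D then levelAt w (i + 1) else levelAt w i

/-- Twice the area between the path and the `x`-axis (trapezoid rule). -/
def twoArea (w : List Step) : ℕ :=
  ∑ i ∈ Finset.range w.length, (levelAt w i + levelAt w (i + 1))

/-- The number of occurrences of `p` as a factor (subword of consecutive letters) of `w`. -/
def occFactor (p w : List Step) : ℕ :=
  ((Finset.range w.length).filter fun i => p <+: w.drop i).card

/-- The `y`-coordinate reached after `i` steps, bicolored version. -/
def cLevelAt (w : List CStep) (i : ℕ) : ℕ :=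
  (w.take i).count CStep.U - (w.take i).count CStep.D

/-- The height of the `i`-th step, bicolored version. -/
def cHeightAt (w : List CStep) (i : ℕ) : ℕ :=
  if w.getD i CStep.H = CStep.D then cLevelAt w (i + 1) else cLevelAt w i

/-- A bicolored Motzkin word: a Motzkin word whose horizontal steps have two possible
colors (`H` and `Ht`), horizontal steps at height `0` not being allowed to have the
second color. -/
def IsBicoloredMotzkin (w : List CStep) : Prop :=
  w.count CStep.U = w.count CStep.D ∧
  (∀ k, (w.take k).count CStep.D ≤ (w.take k).count CStep.U) ∧
  (∀ i < w.length, w.getD i CStep.H = CStep.Ht → cHeightAt w i ≠ 0)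

/-- A histoire de Laguerre of length `n`: a bicolored Motzkin path of length `n`
together with a sequence `l` of nonnegative integers such that `l i ≤ h i` for each
step, the inequality being strict for the horizontal steps of the second color
(the "suitable constraints" of De Medicis and Viennot). -/
def IsLaguerre (n : ℕ) (dl : List CStep × List ℕ) : Prop :=
  dl.1.length = n ∧ dl.2.length = n ∧ IsBicoloredMotzkin dl.1 ∧
  ∀ i < n, dl.2.getD i 0 ≤ cHeightAt dl.1 i ∧
    (dl.1.getD i CStep.H = CStep.Ht → dl.2.getD i 0 < cHeightAt dl.1 i)

/-- A labelled Motzkin path of length `n`: a Motzkin path whose down steps carry a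
label not exceeding their height, all other steps carrying the label `0` (unlabelled). -/
def IsLabelledMotzkin (n : ℕ) (dl : List Step × List ℕ) : Prop :=
  dl.1.length = n ∧ dl.2.length = n ∧ IsMotzkin dl.1 ∧
  ∀ i < n, (dl.1.getD i Step.H = Step.D → dl.2.getD i 0 ≤ heightAt dl.1 i) ∧
    (dl.1.getD i Step.H ≠ Step.D → dl.2.getD i 0 = 0)

/-- The embedding of plain Motzkin steps into bicolored steps. -/
def Step.toC : Step → CStep
  | Step.U => CStep.U
  | Step.D => CStep.D
  | Step.H => CStep.H

/-- The value (as a natural number, 0-indexed) of the permutation `π` at the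
(0-indexed) position `i`; junk value `0` out of range. -/
def pv {n : ℕ} (π : Equiv.Perm (Fin n)) (i : ℕ) : ℕ :=
  if h : i < n then (π ⟨i, h⟩ : Fin n).val else 0

/-- Position `p` starts an ascending run of `π` (in one-line notation):
either `p = 0` or there is a descent just before `p`. -/
def RunStartAt {n : ℕ} (π : Equiv.Perm (Fin n)) (p : Fin n) : Prop :=
  ∀ q : Fin n, (q : ℕ) + 1 = (p : ℕ) → π p < π q

/-- Position `p` ends an ascending run of `π`. -/
def RunEndAt {n : ℕ} (π : Equiv.Perm (Fin n)) (p : Fin n) : Prop :=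
  ∀ q : Fin n, (p : ℕ) + 1 = (q : ℕ) → π q < π p

/-- The step of the bicolored Motzkin path `Γ(π)` associated with the value `v`:
`U` if `v` is a head, `D` if it is a tail, `H` if it is a head-tail, `Ht` if it
is a boarder. -/
def gammaStep {n : ℕ} (π : Equiv.Perm (Fin n)) (v : Fin n) : CStep :=
  if RunStartAt π (π.symm v) then
    if RunEndAt π (π.symm v) then CStep.H else CStep.U
  else
    if RunEndAt π (π.symm v) then CStep.D else CStep.Ht

/-- The label of `Γ(π)` at the value `v`: the number of ascending runs of `π`
(determined by the position `pq.1` of their first element and the position `pq.2`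
of their last element) whose first value is `< v`, whose last value is `> v`, and
whose last element precedes `v` in `π`. -/
def gammaLabel {n : ℕ} (π : Equiv.Perm (Fin n)) (v : Fin n) : ℕ :=
  (Finset.univ.filter fun pq : Fin n × Fin n =>
    RunStartAt π pq.1 ∧ RunEndAt π pq.2 ∧ pq.1 ≤ pq.2 ∧
    (∀ r : Fin n, pq.1 ≤ r → r < pq.2 → ¬ RunEndAt π r) ∧
    π pq.1 < v ∧ v < π pq.2 ∧ pq.2 < π.symm v).card

/-- The map `Γ` from permutations to pairs (bicolored Motzkin path, label sequence). -/
def Gamma {n : ℕ} (π : Equiv.Perm (Fin n)) : List CStep × List ℕ :=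
  (List.ofFn fun v => gammaStep π v, List.ofFn fun v => gammaLabel π v)

/-- The (uncolored) Motzkin path `Γ(π)` for permutations with no boarders:
`U` for heads, `D` for tails, `H` for head-tails. -/
def gammaPath {n : ℕ} (π : Equiv.Perm (Fin n)) : List Step :=
  List.ofFn fun v : Fin n =>
    if RunStartAt π (π.symm v) then
      if RunEndAt π (π.symm v) then Step.H else Step.U
    else
      if RunEndAt π (π.symm v) then Step.D else Step.H

/-- `π` is an involution. -/
def IsInvolution {n : ℕ} (π : Equiv.Perm (Fin n)) : Prop :=
  ∀ x, π (π x) = x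

/-- The Motzkin path `Ψ(π)` of an involution `π`: `H` at fixed points, `U` at the
smaller element of a 2-cycle, `D` at the larger element of a 2-cycle. -/
def psiWord {n : ℕ} (π : Equiv.Perm (Fin n)) : List Step :=
  List.ofFn fun v : Fin n =>
    if π v = v then Step.H else if v < π v then Step.U else Step.D

/-- The label of `Ψ(π)` at `v`: if `v` is the larger element of a 2-cycle
`(π v, v)`, the number of 2-cycles `(x, π x)` with `π v < x < v < π x`; `0` otherwise. -/
def psiLabel {n : ℕ} (π : Equiv.Perm (Fin n)) (v : Fin n) : ℕ :=
  if π v < v then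
    (Finset.univ.filter fun x : Fin n => π v < x ∧ x < v ∧ v < π x).card
  else 0

/-- The map `Ψ` from involutions to labelled Motzkin paths. -/
def Psi {n : ℕ} (π : Equiv.Perm (Fin n)) : List Step × List ℕ :=
  (psiWord π, List.ofFn fun v => psiLabel π v)

/-- Number of inversions of `π`. -/
def invCount {n : ℕ} (π : Equiv.Perm (Fin n)) : ℕ :=
  (Finset.univ.filter fun p : Fin n × Fin n => p.1 < p.2 ∧ π p.2 < π p.1).card

/-- Number of coinversions of `π`. -/
def coinvCount {n : ℕ} (π : Equiv.Perm (Fin n)) : ℕ :=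
  (Finset.univ.filter fun p : Fin n × Fin n => p.1 < p.2 ∧ π p.1 < π p.2).card

/-- Number of descents of `π`. -/
def desCount {n : ℕ} (π : Equiv.Perm (Fin n)) : ℕ :=
  ((Finset.range (n - 1)).filter fun i => pv π (i + 1) < pv π i).card

/-- Number of ascents of `π`. -/
def ascCount {n : ℕ} (π : Equiv.Perm (Fin n)) : ℕ :=
  ((Finset.range (n - 1)).filter fun i => pv π i < pv π (i + 1)).card

/-- Number of fixed points of `π`. -/
def fixCount {n : ℕ} (π : Equiv.Perm (Fin n)) : ℕ :=
  (Finset.univ.filter fun i : Fin n => π i = i).card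

/-- Number of occurrences of the consecutive pattern 123 in `π`. -/
def occC123 {n : ℕ} (π : Equiv.Perm (Fin n)) : ℕ :=
  ((Finset.range (n - 2)).filter fun i =>
    pv π i < pv π (i + 1) ∧ pv π (i + 1) < pv π (i + 2)).card

/-- Number of occurrences of the consecutive pattern 132 in `π`. -/
def occC132 {n : ℕ} (π : Equiv.Perm (Fin n)) : ℕ :=
  ((Finset.range (n - 2)).filter fun i =>
    pv π i < pv π (i + 2) ∧ pv π (i + 2) < pv π (i + 1)).card

/-- Number of occurrences of the consecutive pattern 213 in `π`. -/
def occC213 {n : ℕ} (π : Equiv.Perm (Fin n)) : ℕ :=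
  ((Finset.range (n - 2)).filter fun i =>
    pv π (i + 1) < pv π i ∧ pv π i < pv π (i + 2)).card

/-- Number of occurrences of the consecutive pattern 231 in `π`. -/
def occC231 {n : ℕ} (π : Equiv.Perm (Fin n)) : ℕ :=
  ((Finset.range (n - 2)).filter fun i =>
    pv π (i + 2) < pv π i ∧ pv π i < pv π (i + 1)).card

/-- Number of occurrences of the consecutive pattern 312 in `π`. -/
def occC312 {n : ℕ} (π : Equiv.Perm (Fin n)) : ℕ :=
  ((Finset.range (n - 2)).filter fun i =>
    pv π (i + 1) < pv π (i + 2) ∧ pv π (i + 2) < pv π i).card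

/-- Number of occurrences of the consecutive pattern 321 in `π`. -/
def occC321 {n : ℕ} (π : Equiv.Perm (Fin n)) : ℕ :=
  ((Finset.range (n - 2)).filter fun i =>
    pv π (i + 2) < pv π (i + 1) ∧ pv π (i + 1) < pv π i).card

/-- `π` contains the classical pattern 132. -/
def Contains132 {n : ℕ} (π : Equiv.Perm (Fin n)) : Prop :=
  ∃ i j k : Fin n, i < j ∧ j < k ∧ π i < π k ∧ π k < π j

/-- `π` contains the consecutive pattern 123. -/
def ContainsC123 {n : ℕ} (π : Equiv.Perm (Fin n)) : Prop :=
  ∃ i j k : Fin n, (i : ℕ) + 1 = (j : ℕ) ∧ (j : ℕ) + 1 = (k : ℕ) ∧ π i < π j ∧ π j < π k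

/-- `π` contains the classical pattern 3412. -/
def Contains3412 {n : ℕ} (π : Equiv.Perm (Fin n)) : Prop :=
  ∃ i₁ i₂ i₃ i₄ : Fin n, i₁ < i₂ ∧ i₂ < i₃ ∧ i₃ < i₄ ∧
    π i₃ < π i₄ ∧ π i₄ < π i₁ ∧ π i₁ < π i₂

/-- `π` contains the vincular pattern 1-2̲3̲. -/
def Contains1_23 {n : ℕ} (π : Equiv.Perm (Fin n)) : Prop :=
  ∃ i j k : Fin n, i < j ∧ (j : ℕ) + 1 = (k : ℕ) ∧ π i < π j ∧ π j < π k

/-- `π` contains the vincular pattern 1-3̲2̲. -/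
def Contains1_32 {n : ℕ} (π : Equiv.Perm (Fin n)) : Prop :=
  ∃ i j k : Fin n, i < j ∧ (j : ℕ) + 1 = (k : ℕ) ∧ π i < π k ∧ π k < π j

/-- `w` is the one-line notation of a permutation of `{0, …, n-1}`. -/
def IsPermWord (n : ℕ) (w : List ℕ) : Prop :=
  List.Perm w (List.range n)

/-- Position `p` starts an ascending run of the word `w`. -/
def wRunStart (w : List ℕ) (p : ℕ) : Prop :=
  p = 0 ∨ w.getD p 0 < w.getD (p - 1) 0

/-- Position `p` ends an ascending run of the word `w`. -/
def wRunEnd (w : List ℕ) (p : ℕ) : Prop :=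
  p + 1 = w.length ∨ w.getD (p + 1) 0 < w.getD p 0

/-- The step of `Γ(w)` associated with the value `v`. -/
def wGammaStep (w : List ℕ) (v : ℕ) : CStep :=
  if wRunStart w (w.idxOf v) then
    if wRunEnd w (w.idxOf v) then CStep.H else CStep.U
  else
    if wRunEnd w (w.idxOf v) then CStep.D else CStep.Ht

/-- The label of `Γ(w)` at the value `v`. -/
def wGammaLabel (w : List ℕ) (v : ℕ) : ℕ :=
  ((Finset.range w.length ×ˢ Finset.range w.length).filter fun pq =>
    wRunStart w pq.1 ∧ wRunEnd w pq.2 ∧ pq.1 ≤ pq.2 ∧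
    (∀ r, pq.1 ≤ r → r < pq.2 → ¬ wRunEnd w r) ∧
    w.getD pq.1 0 < v ∧ v < w.getD pq.2 0 ∧ pq.2 < w.idxOf v).card

/-- The map `Γ` on one-line words. -/
def wGamma (w : List ℕ) : List CStep × List ℕ :=
  ((List.range w.length).map (wGammaStep w), (List.range w.length).map (wGammaLabel w))

/-- The word `w` contains the vincular pattern 1-2̲3̲. -/
def wContains1_23 (w : List ℕ) : Prop :=
  ∃ i j, i < j ∧ j + 1 < w.length ∧
    w.getD i 0 < w.getD j 0 ∧ w.getD j 0 < w.getD (j + 1) 0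

/-- The word `w` contains the vincular pattern 1-3̲2̲. -/
def wContains1_32 (w : List ℕ) : Prop :=
  ∃ i j, i < j ∧ j + 1 < w.length ∧
    w.getD i 0 < w.getD (j + 1) 0 ∧ w.getD (j + 1) 0 < w.getD j 0

/-- The word `w` contains the classical pattern 132. -/
def wContains132 (w : List ℕ) : Prop :=
  ∃ i j k, i < j ∧ j < k ∧ k < w.length ∧
    w.getD i 0 < w.getD k 0 ∧ w.getD k 0 < w.getD j 0

/-- The word `w` contains the consecutive pattern 123. -/
def wContainsC123 (w : List ℕ) : Prop :=
  ∃ i, i + 2 < w.length ∧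
    w.getD i 0 < w.getD (i + 1) 0 ∧ w.getD (i + 1) 0 < w.getD (i + 2) 0

/-- The one-line word of the Foata image `F(π)` of an involution `π`: write `π` in
standard cycle notation (each cycle with its least element first, cycles in
decreasing order of their least elements) and erase the parentheses. -/
def foataWord {n : ℕ} (π : Equiv.Perm (Fin n)) : List ℕ :=
  (((List.range n).reverse).map fun m =>
    if pv π m = m then [m]
    else if m < pv π m then [m, pv π m]
    else ([] : List ℕ)).flatten

/-- The number of long tunnels of `d`: occurrences of factors `U α D` with `α` a
nonempty Motzkin word. -/
def longTunnelCount (d : List Step) : ℕ :=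
  ((Finset.range d.length ×ˢ Finset.range d.length).filter fun ij =>
    ij.1 + 1 < ij.2 ∧ d.getD ij.1 Step.H = Step.U ∧ d.getD ij.2 Step.H = Step.D ∧
    IsMotzkin ((d.drop (ij.1 + 1)).take (ij.2 - ij.1 - 1))).card

/-- The number of weak valleys of `d`: occurrences of the factors `HH, HU, DH, DU`. -/
def weakValleyCount (d : List Step) : ℕ :=
  occFactor [Step.H, Step.H] d + occFactor [Step.H, Step.U] d +
  occFactor [Step.D, Step.H] d + occFactor [Step.D, Step.U] d

end

section AuxAvoid

variable {n : ℕ} (π : Equiv.Perm (Fin n))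

lemma aux_not_runEnd {p : Fin n} (h : ¬ RunEndAt π p) :
    ∃ q : Fin n, (p : ℕ) + 1 = (q : ℕ) ∧ π p < π q := by
  unfold RunEndAt at h
  push_neg at h
  obtain ⟨q, hq, hle⟩ := h
  refine ⟨q, hq, lt_of_le_of_ne hle ?_⟩
  intro he
  have hpq : p = q := π.injective he
  rw [hpq] at hq; omega

lemma aux_not_runStart {p : Fin n} (h : ¬ RunStartAt π p) :
    ∃ q : Fin n, (q : ℕ) + 1 = (p : ℕ) ∧ π q < π p := by
  unfold RunStartAt at h
  push_neg at h
  obtain ⟨q, hq, hle⟩ := h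
  refine ⟨q, hq, lt_of_le_of_ne hle ?_⟩
  intro he
  have hpq : q = p := π.injective he
  rw [hpq] at hq; omega

/-- Monotonicity of `π` along a factor containing no run end. -/
lemma aux_chain : ∀ m : ℕ, ∀ a b : Fin n,
    (∀ r, a ≤ r → r < b → ¬ RunEndAt π r) → (b : ℕ) - (a : ℕ) ≤ m → a ≤ b →
    π a ≤ π b := by
  intro m
  induction m with
  | zero =>
    intro a b _ hm hab
    have : a = b := Fin.ext (by rw [Fin.le_def] at hab; omega)
    rw [this]
  | succ m ih =>
    intro a b hno hm hab
    rcases eq_or_lt_of_le hab with h | h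
    · rw [h]
    · obtain ⟨q, hq, hlt⟩ := aux_not_runEnd π (hno a le_rfl h)
      have hv := Fin.lt_def.1 h
      have hqb : q ≤ b := Fin.le_def.2 (by omega)
      refine le_trans hlt.le (ih q b (fun r hqr hrb => hno r ?_ hrb) (by omega) hqb)
      have := Fin.le_def.1 hqr
      rw [Fin.le_def]; omega

/-- Bracket lemma: if `j` is a run start and some earlier position carries a
smaller value, then some complete run before `j` brackets the value `π j`. -/
lemma aux_bracket (j : Fin n) (hj : RunStartAt π j) :
    ∀ k : ℕ, ∀ p : Fin n, (j : ℕ) - (p : ℕ) ≤ k → p < j → π p < π j →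
    ∃ s t : Fin n, RunStartAt π s ∧ RunEndAt π t ∧ s ≤ t ∧
      (∀ r, s ≤ r → r < t → ¬ RunEndAt π r) ∧ π s < π j ∧ π j < π t ∧ t < j := by
  intro k
  induction k with
  | zero =>
    intro p hm hp _
    rw [Fin.lt_def] at hp; omega
  | succ k ih =>
    intro p hm hp hpv
    have hpval : (p : ℕ) < (j : ℕ) := Fin.lt_def.1 hp
    have hjm1lt : (j : ℕ) - 1 < n := lt_of_le_of_lt (Nat.sub_le _ _) j.isLt
    have hjm1val : ((⟨(j : ℕ) - 1, hjm1lt⟩ : Fin n) : ℕ) = (j : ℕ) - 1 := rfl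
    have hjm1end : RunEndAt π ⟨(j : ℕ) - 1, hjm1lt⟩ := by
      intro q hq
      have hqj : q = j := Fin.ext (by omega)
      rw [hqj]
      exact hj _ (by omega)
    obtain ⟨t, htmem, htmin⟩ := Finset.exists_min_image
      (Finset.univ.filter fun q : Fin n => p ≤ q ∧ q < j ∧ RunEndAt π q) id
      ⟨⟨(j : ℕ) - 1, hjm1lt⟩, Finset.mem_filter.2 ⟨Finset.mem_univ _,
        Fin.le_def.2 (by omega), Fin.lt_def.2 (by omega), hjm1end⟩⟩
    rw [Finset.mem_filter] at htmem
    obtain ⟨-, hpt, htj, htend⟩ := htmem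
    have hptv : (p : ℕ) ≤ (t : ℕ) := Fin.le_def.1 hpt
    have htjv : (t : ℕ) < (j : ℕ) := Fin.lt_def.1 htj
    have htmin' : ∀ q : Fin n, p ≤ q → q < j → RunEndAt π q → t ≤ q := fun q h1 h2 h3 =>
      htmin q (Finset.mem_filter.2 ⟨Finset.mem_univ _, h1, h2, h3⟩)
    obtain ⟨s, hsmem, hsmax⟩ := Finset.exists_max_image
      (Finset.univ.filter fun q : Fin n => q ≤ p ∧ RunStartAt π q) id
      ⟨⟨0, lt_of_le_of_lt (Nat.zero_le _) p.isLt⟩, Finset.mem_filter.2 ⟨Finset.mem_univ _,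
        Fin.le_def.2 (Nat.zero_le _), fun q hq => absurd hq (Nat.succ_ne_zero _)⟩⟩
    rw [Finset.mem_filter] at hsmem
    obtain ⟨-, hsp, hsstart⟩ := hsmem
    have hspv : (s : ℕ) ≤ (p : ℕ) := Fin.le_def.1 hsp
    have hsmax' : ∀ q : Fin n, q ≤ p → RunStartAt π q → q ≤ s := fun q h1 h2 =>
      hsmax q (Finset.mem_filter.2 ⟨Finset.mem_univ _, h1, h2⟩)
    have hnoend : ∀ r, s ≤ r → r < t → ¬ RunEndAt π r := by
      intro r hsr hrt hrend
      have hrtv : (r : ℕ) < (t : ℕ) := Fin.lt_def.1 hrt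
      have hsrv : (s : ℕ) ≤ (r : ℕ) := Fin.le_def.1 hsr
      rcases Nat.lt_or_ge (r : ℕ) (p : ℕ) with hrp | hpr
      · have hr1 : (r : ℕ) + 1 < n := lt_of_le_of_lt hrp p.isLt
        have hr1val : ((⟨(r : ℕ) + 1, hr1⟩ : Fin n) : ℕ) = (r : ℕ) + 1 := rfl
        have hr1start : RunStartAt π ⟨(r : ℕ) + 1, hr1⟩ := by
          intro q hq
          have hqr : q = r := Fin.ext (by omega)
          rw [hqr]
          exact hrend _ rfl
        have := Fin.le_def.1 (hsmax' ⟨(r : ℕ) + 1, hr1⟩ (Fin.le_def.2 (by omega)) hr1start)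
        omega
      · have := Fin.le_def.1 (htmin' r (Fin.le_def.2 hpr) (Fin.lt_def.2 (by omega)) hrend)
        omega
    have hmono : π s ≤ π p := aux_chain π (p : ℕ) s p
      (fun r h1 h2 => hnoend r h1 (Fin.lt_def.2
        (by have := Fin.lt_def.1 h2; omega))) (by omega) hsp
    rcases lt_or_ge (π j) (π t) with hcase | hcase
    · exact ⟨s, t, hsstart, htend, le_trans hsp hpt, hnoend,
        lt_of_le_of_lt hmono hpv, hcase, htj⟩
    · have htne : π t ≠ π j := by
        intro h
        have := congrArg Fin.val (π.injective h)
        omega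
      have htlt : π t < π j := lt_of_le_of_ne hcase htne
      have ht1j : (t : ℕ) + 1 < (j : ℕ) := by
        rcases Nat.lt_or_ge ((t : ℕ) + 1) (j : ℕ) with h | h
        · exact h
        · exfalso
          have hteq : t = ⟨(j : ℕ) - 1, hjm1lt⟩ := Fin.ext (by omega)
          have hlj := hj ⟨(j : ℕ) - 1, hjm1lt⟩ (by omega)
          rw [← hteq] at hlj
          exact absurd htlt (not_lt.2 hlj.le)
      have ht1n : (t : ℕ) + 1 < n := lt_trans ht1j j.isLt
      have hp'val : ((⟨(t : ℕ) + 1, ht1n⟩ : Fin n) : ℕ) = (t : ℕ) + 1 := rfl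
      have hp'lt : π ⟨(t : ℕ) + 1, ht1n⟩ < π t := htend _ rfl
      exact ih ⟨(t : ℕ) + 1, ht1n⟩ (by omega) (Fin.lt_def.2 (by omega))
        (lt_trans hp'lt htlt)

lemma aux_label_pos (j : Fin n) (hj : RunStartAt π j) (p : Fin n)
    (hp : p < j) (hpv : π p < π j) : 0 < gammaLabel π (π j) := by
  obtain ⟨s, t, h1, h2, h3, h4, h5, h6, h7⟩ :=
    aux_bracket π j hj (j : ℕ) p (by omega) hp hpv
  unfold gammaLabel
  rw [Finset.card_pos]
  refine ⟨(s, t), Finset.mem_filter.2 ⟨Finset.mem_univ _, h1, h2, h3, h4, h5, h6, ?_⟩⟩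
  rw [Equiv.symm_apply_apply]
  exact h7

end AuxAvoid

/-- For `π ∈ S_n` with `Γ(π) = (d, l)`: `π` avoids both vincular
patterns 1-3̲2̲ and 1-2̲3̲ if and only if `d` has no horizontal steps of color `c₂` and
every index with a positive label is a down step. -/
theorem avoids_vincular_iff_gamma (n : ℕ) (π : Equiv.Perm (Fin n)) :
    (¬ Contains1_32 π ∧ ¬ Contains1_23 π) ↔
      ((∀ v : Fin n, gammaStep π v ≠ CStep.Ht) ∧
        (∀ v : Fin n, 0 < gammaLabel π v → gammaStep π v = CStep.D)) := by
  constructor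
  · rintro ⟨h32, h23⟩
    constructor
    · intro v hHt
      unfold gammaStep at hHt
      by_cases h1 : RunStartAt π (π.symm v)
      · rw [if_pos h1] at hHt
        split_ifs at hHt <;> exact CStep.noConfusion hHt
      · rw [if_neg h1] at hHt
        by_cases h2 : RunEndAt π (π.symm v)
        · rw [if_pos h2] at hHt
          exact CStep.noConfusion hHt
        · obtain ⟨q, hq, hq'⟩ := aux_not_runStart π h1
          obtain ⟨r, hr, hr'⟩ := aux_not_runEnd π h2
          exact h23 ⟨q, π.symm v, r, Fin.lt_def.2 (by omega), hr, hq', hr'⟩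
    · intro v hl
      by_contra hD
      unfold gammaLabel at hl
      rw [Finset.card_pos] at hl
      obtain ⟨⟨s, t⟩, hmem⟩ := hl
      rw [Finset.mem_filter] at hmem
      obtain ⟨-, hs, ht, hst, hrun, hv1, hv2, hv3⟩ := hmem
      set p := π.symm v with hpdef
      have hpv : π p = v := by rw [hpdef]; exact π.apply_symm_apply v
      have hv3v : (t : ℕ) < (p : ℕ) := Fin.lt_def.1 hv3
      have hstv : (s : ℕ) ≤ (t : ℕ) := Fin.le_def.1 hst
      by_cases hend : RunEndAt π p
      · by_cases hstart : RunStartAt π p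
        · -- head-tail: produce a 1-32
          have hq0 : (p : ℕ) - 1 < n := lt_of_le_of_lt (Nat.sub_le _ _) p.isLt
          have hqval : ((⟨(p : ℕ) - 1, hq0⟩ : Fin n) : ℕ) = (p : ℕ) - 1 := rfl
          have hq : ((⟨(p : ℕ) - 1, hq0⟩ : Fin n) : ℕ) + 1 = (p : ℕ) := by omega
          have hπq : π p < π ⟨(p : ℕ) - 1, hq0⟩ := hstart _ hq
          have hsq : s < (⟨(p : ℕ) - 1, hq0⟩ : Fin n) := by
            rw [Fin.lt_def]
            rcases Nat.lt_or_ge (s : ℕ) ((p : ℕ) - 1) with h | h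
            · omega
            · exfalso
              have hts : t = s := Fin.ext (by omega)
              rw [hts] at hv2
              exact absurd hv2 (not_lt.2 hv1.le)
          refine h32 ⟨s, _, p, hsq, hq, ?_, hπq⟩
          rw [← hpv] at hv1
          exact hv1
        · refine hD ?_
          unfold gammaStep
          rw [← hpdef, if_neg hstart, if_pos hend]
      · obtain ⟨r, hr, hπr⟩ := aux_not_runEnd π hend
        refine h23 ⟨s, p, r, lt_of_le_of_lt hst hv3, hr, ?_, hπr⟩
        rw [← hpv] at hv1
        exact hv1
  · rintro ⟨hHt, hL⟩
    constructor
    · rintro ⟨i, j, k, hij, hjk, h1, h2⟩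
      have hks : RunStartAt π k := by
        intro q hq
        have hqj : q = j := Fin.ext (by omega)
        rw [hqj]; exact h2
      have hlk := aux_label_pos π k hks i
        (lt_trans hij (Fin.lt_def.2 (by omega))) h1
      have hD := hL (π k) hlk
      unfold gammaStep at hD
      rw [Equiv.symm_apply_apply, if_pos hks] at hD
      split_ifs at hD <;> exact CStep.noConfusion hD
    · rintro ⟨i, j, k, hij, hjk, h1, h2⟩
      have hjs : RunStartAt π j := by
        by_contra hns
        have hne : ¬ RunEndAt π j := fun he => absurd (he k hjk) (not_lt.2 h2.le)
        refine hHt (π j) ?_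
        unfold gammaStep
        rw [Equiv.symm_apply_apply, if_neg hns, if_neg hne]
      have hlj := aux_label_pos π j hjs i hij h1
      have hD := hL (π j) hlj
      unfold gammaStep at hD
      rw [Equiv.symm_apply_apply, if_pos hjs] at hD
      split_ifs at hD <;> exact CStep.noConfusion hD
end

section
/- The Foata map F restricts to a bijection from the set I_n(3412) of involutions of length n avoiding the classical pattern 3412 onto the set S_n(132, 1̲2̲3̲) of permutations avoiding the classical pattern 132 and the consecutive pattern 123. -/
open scoped Classical

noncomputable section FoataAuxSec
namespace FoataAux
open List

variable {n : ℕ}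

lemma pv_def (π : Equiv.Perm (Fin n)) (v : Fin n) : pv π (v : ℕ) = ((π v : Fin n) : ℕ) := by
  simp [pv, v.isLt]

lemma pv_lt (π : Equiv.Perm (Fin n)) {v : ℕ} (h : v < n) : pv π v < n := by
  have h1 : pv π v = ((π ⟨v, h⟩ : Fin n) : ℕ) := by simp [pv, h]
  rw [h1]; exact (π ⟨v, h⟩).isLt

lemma pv_pv {π : Equiv.Perm (Fin n)} (hπ : IsInvolution π) {v : ℕ} (h : v < n) :
    pv π (pv π v) = v := by
  have h1 : pv π v = ((π ⟨v, h⟩ : Fin n) : ℕ) := by simp [pv, h]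
  rw [h1, pv_def π (π ⟨v, h⟩), hπ]

/-- minimum of the cycle of `v`. -/
def mc (π : Equiv.Perm (Fin n)) (v : ℕ) : ℕ := min v (pv π v)

/-- the linear order in which values appear in the Foata word. -/
def rr (π : Equiv.Perm (Fin n)) (u v : ℕ) : Prop :=
  mc π v < mc π u ∨ (mc π u = mc π v ∧ u ≤ v)

lemma rr_refl (π : Equiv.Perm (Fin n)) (v : ℕ) : rr π v v := Or.inr ⟨rfl, le_rfl⟩

lemma rr_antisymm (π : Equiv.Perm (Fin n)) {u v : ℕ} :
    rr π u v → rr π v u → u = v := by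
  rintro (h1 | ⟨e1, l1⟩) (h2 | ⟨e2, l2⟩) <;> omega

lemma mc_le (π : Equiv.Perm (Fin n)) (v : ℕ) : mc π v ≤ v := min_le_left _ _

lemma mc_lt (π : Equiv.Perm (Fin n)) {v : ℕ} (h : v < n) : mc π v < n :=
  lt_of_le_of_lt (mc_le π v) h

lemma pv_mc {π : Equiv.Perm (Fin n)} (hπ : IsInvolution π) {v : ℕ} (h : v < n) :
    pv π (mc π v) = max v (pv π v) := by
  rcases le_total v (pv π v) with hle | hle
  · rw [mc, min_eq_left hle, max_eq_right hle]
  · rw [mc, min_eq_right hle, max_eq_left hle, pv_pv hπ h]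

lemma mc_mc {π : Equiv.Perm (Fin n)} (hπ : IsInvolution π) {v : ℕ} (h : v < n) :
    mc π (mc π v) = mc π v := by
  have h1 : mc π (mc π v) = min (mc π v) (pv π (mc π v)) := rfl
  rw [h1, pv_mc hπ h]
  have h2 : mc π v = min v (pv π v) := rfl
  omega

lemma mc_pv {π : Equiv.Perm (Fin n)} (hπ : IsInvolution π) {v : ℕ} (h : v < n) :
    mc π (pv π v) = mc π v := by
  have h1 : mc π (pv π v) = min (pv π v) (pv π (pv π v)) := rfl
  have h2 : mc π v = min v (pv π v) := rfl
  rw [h1, pv_pv hπ h]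
  omega

lemma eq_or_pv {π : Equiv.Perm (Fin n)} (hπ : IsInvolution π) {v m : ℕ} (h : v < n)
    (he : mc π v = m) : v = m ∨ v = pv π m := by
  rcases min_choice v (pv π v) with h1 | h1
  · left; rw [← he, mc, h1]
  · right
    have h2 : pv π v = m := by rw [← he, mc, h1]
    rw [← h2, pv_pv hπ h]

lemma mc_eq_lt {π : Equiv.Perm (Fin n)} (hπ : IsInvolution π) {u v : ℕ} (hu : u < n)
    (hv : v < n) (hmc : mc π u = mc π v) (hlt : u < v) : mc π u = u ∧ pv π u = v := by
  rcases eq_or_pv hπ hu rfl with h1 | h1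
  · rcases eq_or_pv hπ hv hmc.symm with h2 | h2
    · omega
    · refine ⟨h1.symm, ?_⟩
      rw [h2, ← h1]
  · rcases eq_or_pv hπ hv hmc.symm with h2 | h2
    · have := mc_le π u
      omega
    · exfalso
      have : u = v := by rw [h1, h2, hmc]
      omega

/-! ### word toolbox -/

variable {π : Equiv.Perm (Fin n)} {w : List ℕ}

lemma len_w (hw : w.Perm (List.range n)) : w.length = n := by
  simpa using hw.length_eq

lemma mem_w (hw : w.Perm (List.range n)) {v : ℕ} : v ∈ w ↔ v < n := by
  rw [hw.mem_iff, List.mem_range]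

lemma nodup_w (hw : w.Perm (List.range n)) : w.Nodup :=
  hw.nodup_iff.2 List.nodup_range

lemma getD_lt_n (hw : w.Perm (List.range n)) {i : ℕ} (hi : i < n) : w.getD i 0 < n := by
  have hi' : i < w.length := by rw [len_w hw]; exact hi
  rw [List.getD_eq_getElem _ _ hi']
  exact (mem_w hw).1 (List.getElem_mem hi')

lemma indexOf_lt (hw : w.Perm (List.range n)) {v : ℕ} (hv : v < n) : w.idxOf v < n := by
  rw [← len_w hw]
  exact List.idxOf_lt_length_iff.2 ((mem_w hw).2 hv)

lemma getD_indexOf (hw : w.Perm (List.range n)) {v : ℕ} (hv : v < n) :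
    w.getD (w.idxOf v) 0 = v := by
  have h1 : w.idxOf v < w.length := List.idxOf_lt_length_iff.2 ((mem_w hw).2 hv)
  rw [List.getD_eq_getElem _ _ h1]
  exact List.getElem_idxOf h1

lemma indexOf_getD (hw : w.Perm (List.range n)) {i : ℕ} (hi : i < n) :
    w.idxOf (w.getD i 0) = i := by
  have hi' : i < w.length := by rw [len_w hw]; exact hi
  rw [List.getD_eq_getElem _ _ hi']
  exact (nodup_w hw).idxOf_getElem _ _

lemma getD_inj (hw : w.Perm (List.range n)) {i j : ℕ} (hi : i < n) (hj : j < n)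
    (he : w.getD i 0 = w.getD j 0) : i = j := by
  rw [← indexOf_getD hw hi, he, indexOf_getD hw hj]

lemma rel_getD (hw : w.Perm (List.range n)) (hs : List.Pairwise (rr π) w) {i j : ℕ}
    (hij : i < j) (hj : j < n) : rr π (w.getD i 0) (w.getD j 0) := by
  have hj' : j < w.length := by rw [len_w hw]; exact hj
  have hi' : i < w.length := lt_trans hij hj'
  rw [List.getD_eq_getElem _ _ hi', List.getD_eq_getElem _ _ hj']
  exact List.pairwise_iff_getElem.1 hs i j hi' hj' hij

lemma rel_pos (hw : w.Perm (List.range n)) (hs : List.Pairwise (rr π) w) {u v : ℕ}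
    (hu : u < n) (hv : v < n) (h : w.idxOf u < w.idxOf v) : rr π u v := by
  have := rel_getD hw hs h (indexOf_lt hw hv)
  rwa [getD_indexOf hw hu, getD_indexOf hw hv] at this

lemma pos_lt_of_not_rr (hw : w.Perm (List.range n)) (hs : List.Pairwise (rr π) w) {u v : ℕ}
    (hu : u < n) (hv : v < n) (h : ¬ rr π u v) : w.idxOf v < w.idxOf u := by
  rcases lt_trichotomy (w.idxOf u) (w.idxOf v) with hlt | heq | hgt
  · exact absurd (rel_pos hw hs hu hv hlt) h
  · exfalso
    have : u = v := by rw [← getD_indexOf hw hu, heq, getD_indexOf hw hv]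
    exact h (this ▸ rr_refl π u)
  · exact hgt

/-! ### adjacency -/

lemma adj (hπ : IsInvolution π) (hw : w.Perm (List.range n)) (hs : List.Pairwise (rr π) w)
    {p : ℕ} (hp : p + 1 < n) (hlt : w.getD p 0 < w.getD (p + 1) 0) :
    pv π (w.getD p 0) = w.getD (p + 1) 0 := by
  have hu : w.getD p 0 < n := getD_lt_n hw (by omega)
  have hv : w.getD (p + 1) 0 < n := getD_lt_n hw hp
  have hr : rr π (w.getD p 0) (w.getD (p + 1) 0) := rel_getD hw hs (by omega) hp
  rcases hr with hlt2 | ⟨heq, -⟩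
  · exfalso
    have hmlt : mc π (w.getD (p + 1) 0) < n := mc_lt π hv
    have hmleu : mc π (w.getD p 0) ≤ w.getD p 0 := mc_le π _
    have hmlev : mc π (w.getD (p + 1) 0) ≤ w.getD (p + 1) 0 := mc_le π _
    have hmv : mc π (w.getD (p + 1) 0) ≠ w.getD (p + 1) 0 := by omega
    have hpvv : pv π (w.getD (p + 1) 0) = mc π (w.getD (p + 1) 0) := by
      have hd : mc π (w.getD (p + 1) 0)
          = min (w.getD (p + 1) 0) (pv π (w.getD (p + 1) 0)) := rfl
      omega
    have hmm : mc π (mc π (w.getD (p + 1) 0)) = mc π (w.getD (p + 1) 0) := by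
      rw [← hpvv, mc_pv hπ hv, hpvv]
    have h1 : ¬ rr π (mc π (w.getD (p + 1) 0)) (w.getD p 0) := by
      rintro (h | ⟨h, -⟩) <;> rw [hmm] at h <;> omega
    have h2 : ¬ rr π (w.getD (p + 1) 0) (mc π (w.getD (p + 1) 0)) := by
      rintro (h | ⟨-, h⟩)
      · rw [hmm] at h; omega
      · omega
    have hp1 := pos_lt_of_not_rr hw hs hmlt hu h1
    have hp2 := pos_lt_of_not_rr hw hs hv hmlt h2
    rw [indexOf_getD hw (show p < n by omega)] at hp1
    rw [indexOf_getD hw hp] at hp2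
    omega
  · exact (mc_eq_lt hπ hu hv heq hlt).2

lemma c123_not (hπ : IsInvolution π) (hw : w.Perm (List.range n))
    (hs : List.Pairwise (rr π) w) : ¬ wContainsC123 w := by
  rintro ⟨i, hi, h1, h2⟩
  rw [len_w hw] at hi
  have e1 := adj hπ hw hs (show i + 1 < n by omega) h1
  have e2 := adj hπ hw hs (show (i + 1) + 1 < n by omega) h2
  have e3 := pv_pv hπ (getD_lt_n hw (show i < n by omega))
  rw [e1, e2] at e3
  have e4 : w.getD (i + 1 + 1) 0 = w.getD (i + 2) 0 := rfl
  omega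

/-! ### crossings -/

def Crossing (π : Equiv.Perm (Fin n)) : Prop :=
  ∃ a b : Fin n, a < b ∧ b < π a ∧ π a < π b

lemma cross_iff_3412 (hπ : IsInvolution π) : Contains3412 π ↔ Crossing π := by
  constructor
  · rintro ⟨i1, i2, i3, i4, h12, h23, h34, k34, k41, k12⟩
    by_cases hc1 : i2 < π i1
    · exact ⟨i1, i2, h12, hc1, k12⟩
    · have hc1' : π i1 < i2 := by
        rcases lt_or_eq_of_le (not_lt.1 hc1) with h | h
        · exact h
        · exfalso
          have e : π i2 = i1 := by rw [← h, hπ]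
          rw [h, e] at k12
          exact absurd h12 (not_lt.2 k12.le)
      by_cases hc2 : π i4 < i3
      · refine ⟨π i3, π i4, k34, ?_, ?_⟩
        · rw [hπ]; exact hc2
        · rw [hπ, hπ]; exact h34
      · have hc2' : i3 < π i4 := by
          rcases lt_or_eq_of_le (not_lt.1 hc2) with h | h
          · exact h
          · exfalso
            have e : π i3 = i4 := by rw [h, hπ]
            rw [e, ← h] at k34
            exact absurd h34 (not_lt.2 k34.le)
        refine ⟨π i3, i2, ?_, ?_, ?_⟩
        · exact (k34.trans k41).trans hc1'
        · rw [hπ]; exact h23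
        · rw [hπ]; exact hc2'.trans (k41.trans k12)
  · rintro ⟨a, b, h1, h2, h3⟩
    refine ⟨a, b, π a, π b, h1, h2, h3, ?_, ?_, h3⟩
    · rw [hπ, hπ]; exact h1
    · rw [hπ]; exact h2

lemma cross_of_132 (hπ : IsInvolution π) (hw : w.Perm (List.range n))
    (hs : List.Pairwise (rr π) w) (hc : wContains132 w) : Crossing π := by
  obtain ⟨i, j, k, hij, hjk, hk, h1, h2⟩ := hc
  rw [len_w hw] at hk
  set x := w.getD i 0 with hx0
  set y := w.getD j 0 with hy0
  set z := w.getD k 0 with hz0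
  have hx : x < n := getD_lt_n hw (by omega)
  have hy : y < n := getD_lt_n hw (by omega)
  have hz : z < n := getD_lt_n hw hk
  have rxy : rr π x y := rel_getD (π := π) hw hs hij (by omega)
  have ryz : rr π y z := rel_getD (π := π) hw hs hjk hk
  have hmzlez : mc π z ≤ z := mc_le π z
  have hmxlex : mc π x ≤ x := mc_le π x
  have hmyley : mc π y ≤ y := mc_le π y
  have hz' : mc π z < n := mc_lt π hz
  have hy' : mc π y < n := mc_lt π hy
  rcases rxy with hmyx | ⟨hmeq, -⟩
  · -- different cycles : mc y < mc x
    rcases ryz with hmzy | ⟨h, hle⟩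
    · -- mc z < mc y
      have hzmc : z ≠ mc π z := by omega
      have hzpv : z = pv π (mc π z) := by
        rcases eq_or_pv hπ hz rfl with h | h
        · exact absurd h hzmc
        · exact h
      have hymc : y ≠ mc π y := by omega
      have hypv : y = pv π (mc π y) := by
        rcases eq_or_pv hπ hy rfl with h | h
        · exact absurd h hymc
        · exact h
      have hmyz : mc π y < z := by
        rcases lt_trichotomy z (mc π y) with h | h | h
        · omega
        · exfalso
          have := mc_mc hπ hy
          rw [← h] at this
          omega
        · exact h
      have ea : ((π ⟨mc π z, hz'⟩ : Fin n) : ℕ) = z := by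
        rw [← pv_def]
        exact hzpv.symm
      have eb : ((π ⟨mc π y, hy'⟩ : Fin n) : ℕ) = y := by
        rw [← pv_def]
        exact hypv.symm
      refine ⟨⟨mc π z, hz'⟩, ⟨mc π y, hy'⟩, Fin.mk_lt_mk.2 hmzy, ?_, ?_⟩
      · rw [Fin.lt_def, ea]
        exact hmyz
      · rw [Fin.lt_def, ea, eb]
        exact h2
    · omega
  · -- same cycle for x, y
    obtain ⟨hmx, hpx⟩ := mc_eq_lt hπ hx hy hmeq (by omega)
    rcases ryz with hmzy | ⟨h, hle⟩
    · have hzmc : z ≠ mc π z := by omega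
      have hzpv : z = pv π (mc π z) := by
        rcases eq_or_pv hπ hz rfl with h | h
        · exact absurd h hzmc
        · exact h
      have ea : ((π ⟨mc π z, hz'⟩ : Fin n) : ℕ) = z := by
        rw [← pv_def]
        exact hzpv.symm
      have eb : ((π ⟨x, hx⟩ : Fin n) : ℕ) = y := by
        rw [← pv_def]
        exact hpx
      refine ⟨⟨mc π z, hz'⟩, ⟨x, hx⟩, Fin.mk_lt_mk.2 (by omega), ?_, ?_⟩
      · rw [Fin.lt_def, ea]
        exact h1
      · rw [Fin.lt_def, ea, eb]
        exact h2
    · omega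

lemma c132_of_cross (hπ : IsInvolution π) (hw : w.Perm (List.range n))
    (hs : List.Pairwise (rr π) w) (hc : Crossing π) : wContains132 w := by
  obtain ⟨a, b, hab, hba, hpab⟩ := hc
  rw [Fin.lt_def] at hab hba hpab
  have epa : pv π (a : ℕ) = ((π a : Fin n) : ℕ) := pv_def π a
  have epb : pv π (b : ℕ) = ((π b : Fin n) : ℕ) := pv_def π b
  have hmca : mc π (a : ℕ) = a := by
    have : mc π (a : ℕ) = min (a : ℕ) (pv π a) := rfl
    rw [this, epa]; omega
  have hmcb : mc π (b : ℕ) = b := by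
    have : mc π (b : ℕ) = min (b : ℕ) (pv π b) := rfl
    rw [this, epb]; omega
  have hmcpa : mc π ((π a : Fin n) : ℕ) = a := by
    rw [← epa, mc_pv hπ a.isLt, hmca]
  have hmcpb : mc π ((π b : Fin n) : ℕ) = b := by
    rw [← epb, mc_pv hπ b.isLt, hmcb]
  have h1 : ¬ rr π ((π b : Fin n) : ℕ) (b : ℕ) := by
    rintro (h | ⟨-, h⟩)
    · rw [hmcpb, hmcb] at h; omega
    · omega
  have h2 : ¬ rr π ((π a : Fin n) : ℕ) ((π b : Fin n) : ℕ) := by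
    rintro (h | ⟨h, -⟩)
    · rw [hmcpb, hmcpa] at h; omega
    · rw [hmcpa, hmcpb] at h; omega
  have p1 : w.idxOf (b : ℕ) < w.idxOf ((π b : Fin n) : ℕ) :=
    pos_lt_of_not_rr hw hs (π b).isLt b.isLt h1
  have p2 : w.idxOf ((π b : Fin n) : ℕ) < w.idxOf ((π a : Fin n) : ℕ) :=
    pos_lt_of_not_rr hw hs (π a).isLt (π b).isLt h2
  refine ⟨w.idxOf (b : ℕ), w.idxOf ((π b : Fin n) : ℕ),
    w.idxOf ((π a : Fin n) : ℕ), p1, p2, ?_, ?_, ?_⟩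
  · rw [len_w hw]; exact indexOf_lt hw (π a).isLt
  · rw [getD_indexOf hw b.isLt, getD_indexOf hw (π a).isLt]; exact hba
  · rw [getD_indexOf hw (π a).isLt, getD_indexOf hw (π b).isLt]; exact hpab

/-! ### pair adjacency and decoding -/

lemma pair_adj (hπ : IsInvolution π) (hw : w.Perm (List.range n))
    (hs : List.Pairwise (rr π) w) {v : ℕ} (hv : v < n) (hne : pv π v ≠ v) :
    mc π v < pv π (mc π v) ∧ w.idxOf (pv π (mc π v)) = w.idxOf (mc π v) + 1 := by
  have hmn : mc π v < n := mc_lt π hv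
  have hqmax : pv π (mc π v) = max v (pv π v) := pv_mc hπ hv
  have hmdef : mc π v = min v (pv π v) := rfl
  have hmq : mc π v < pv π (mc π v) := by omega
  have hqn : pv π (mc π v) < n := pv_lt π hmn
  have hmcm : mc π (mc π v) = mc π v := mc_mc hπ hv
  have hmcq : mc π (pv π (mc π v)) = mc π v := by
    rw [mc_pv hπ hmn, hmcm]
  refine ⟨hmq, ?_⟩
  have h1 : ¬ rr π (pv π (mc π v)) (mc π v) := by
    rintro (h | ⟨-, h⟩)
    · rw [hmcm, hmcq] at h; omega
    · omega
  have hposmq : w.idxOf (mc π v) < w.idxOf (pv π (mc π v)) :=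
    pos_lt_of_not_rr hw hs hqn hmn h1
  rcases Nat.lt_or_ge (w.idxOf (mc π v) + 1) (w.idxOf (pv π (mc π v))) with hgap | hge
  · exfalso
    have hjn : w.idxOf (mc π v) + 1 < n := lt_trans hgap (indexOf_lt hw hqn)
    set j := w.idxOf (mc π v) + 1 with hj0
    set x := w.getD j 0 with hx0
    have hxn : x < n := getD_lt_n hw hjn
    have hposx : w.idxOf x = j := indexOf_getD hw hjn
    have r1 : rr π (mc π v) x := rel_pos hw hs hmn hxn (by rw [hposx]; omega)
    have r2 : rr π x (pv π (mc π v)) := rel_pos hw hs hxn hqn (by rw [hposx]; exact hgap)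
    rcases r1 with hlt1 | ⟨heq1, -⟩
    · rw [hmcm] at hlt1
      rcases r2 with hlt2 | ⟨heq2, -⟩
      · rw [hmcq] at hlt2; omega
      · rw [hmcq] at heq2; omega
    · rw [hmcm] at heq1
      rcases eq_or_pv hπ hxn heq1.symm with hxm | hxq
      · rw [hxm] at hposx; omega
      · rw [hxq] at hposx; omega
  · omega

lemma decode_eq (hπ : IsInvolution π) (hw : w.Perm (List.range n))
    (hs : List.Pairwise (rr π) w) {v : ℕ} (hv : v < n) :
    pv π v =
      (if w.idxOf v + 1 < n ∧ w.getD (w.idxOf v) 0 < w.getD (w.idxOf v + 1) 0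
        then w.getD (w.idxOf v + 1) 0
        else if 0 < w.idxOf v ∧ w.getD (w.idxOf v - 1) 0 < w.getD (w.idxOf v) 0
        then w.getD (w.idxOf v - 1) 0
        else v) := by
  have hpn : w.idxOf v < n := indexOf_lt hw hv
  have hgv : w.getD (w.idxOf v) 0 = v := getD_indexOf hw hv
  split_ifs with hA1 hA2
  · have h := adj hπ hw hs hA1.1 hA1.2
    rwa [hgv] at h
  · obtain ⟨hp0, hlt⟩ := hA2
    have hp1 : w.idxOf v - 1 + 1 = w.idxOf v := by omega
    have e : pv π (w.getD (w.idxOf v - 1) 0) = v := by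
      have h := adj hπ hw hs (p := w.idxOf v - 1) (by omega) (by rw [hp1]; exact hlt)
      rwa [hp1, hgv] at h
    have h2 := pv_pv hπ (getD_lt_n hw (show w.idxOf v - 1 < n by omega)) (π := π)
    rw [e] at h2
    exact h2
  · by_contra hne2
    obtain ⟨hmq, hadj⟩ := pair_adj hπ hw hs hv hne2
    rcases eq_or_pv hπ hv rfl with h1 | h1
    · apply hA1
      rw [← h1] at hadj hmq
      constructor
      · rw [← hadj]
        exact indexOf_lt hw (pv_lt π hv)
      · have e2 : w.getD (w.idxOf v + 1) 0 = pv π v := by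
          rw [← hadj]
          exact getD_indexOf hw (pv_lt π hv)
        rw [hgv, e2]
        exact hmq
    · apply hA2
      have hmn : mc π v < n := mc_lt π hv
      rw [← h1] at hadj
      constructor
      · omega
      · have e2 : w.getD (w.idxOf v - 1) 0 = mc π v := by
          have : w.idxOf v - 1 = w.idxOf (mc π v) := by omega
          rw [this]
          exact getD_indexOf hw hmn
        rw [hgv, e2]
        rw [← h1] at hmq
        exact hmq

/-! ### the Foata word is sorted -/

def blkF (π : Equiv.Perm (Fin n)) (m : ℕ) : List ℕ :=
  if pv π m = m then [m] else if m < pv π m then [m, pv π m] else ([] : List ℕ)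

lemma foata_eq (π : Equiv.Perm (Fin n)) :
    foataWord π = (((List.range n).reverse).map (blkF π)).flatten := rfl

lemma mem_blk (hπ : IsInvolution π) {m x : ℕ} (hm : m < n) (hx : x ∈ blkF π m) :
    mc π x = m ∧ x < n := by
  unfold blkF at hx
  split_ifs at hx with h1 h2
  · simp only [List.mem_singleton] at hx
    subst hx
    constructor
    · have : mc π x = min x (pv π x) := rfl
      omega
    · exact hm
  · simp only [List.mem_cons, List.mem_singleton, List.not_mem_nil, or_false] at hx
    rcases hx with h | h
    · subst h
      constructor
      · have : mc π x = min x (pv π x) := rfl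
        omega
      · exact hm
    · subst h
      refine ⟨?_, pv_lt π hm⟩
      rw [mc_pv hπ hm]
      have : mc π m = min m (pv π m) := rfl
      omega
  · simp at hx

lemma count_blk (hπ : IsInvolution π) {a m : ℕ} (ha : a < n) (hm : m < n) :
    List.count a (blkF π m) = if mc π a = m then 1 else 0 := by
  by_cases hmc : mc π a = m
  · rw [if_pos hmc]
    have h1 := eq_or_pv hπ ha hmc
    unfold blkF
    split_ifs with hf hlt
    · have : a = m := by
        rcases h1 with h | h
        · exact h
        · rw [h, hf]
      apply List.count_eq_one_of_mem (by simp) (by simp [this])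
    · have hne : m ≠ pv π m := by omega
      apply List.count_eq_one_of_mem (by simp [hne]) (by simpa using h1)
    · exfalso
      have e1 : mc π m = m := by
        have := mc_mc hπ ha
        rw [hmc] at this
        exact this
      have e2 : mc π m = min m (pv π m) := rfl
      omega
  · rw [if_neg hmc, List.count_eq_zero]
    intro hmem
    exact hmc (mem_blk hπ hm hmem).1

lemma sum_ind_range (b : ℕ) (N : ℕ) :
    ((List.range N).map fun m => if b = m then 1 else 0).sum = if b < N then 1 else 0 := by
  induction N with
  | zero => simp
  | succ N ih =>
    rw [List.range_succ, List.map_append, List.sum_append, ih]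
    simp only [List.map_cons, List.map_nil, List.sum_cons, List.sum_nil]
    split_ifs <;> omega

lemma perm_foata (hπ : IsInvolution π) : (foataWord π).Perm (List.range n) := by
  rw [List.perm_iff_count]
  intro a
  rw [foata_eq, List.count_flatten, List.map_map]
  by_cases ha : a < n
  · have he : ∀ m ∈ (List.range n).reverse,
        (List.count a ∘ blkF π) m = (fun m => if mc π a = m then 1 else 0) m := by
      intro m hm
      have hm' : m < n := by simpa using hm
      exact count_blk hπ ha hm'
    rw [List.map_congr_left he, List.map_reverse, List.sum_reverse, sum_ind_range,
      if_pos (mc_lt π ha)]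
    exact (List.count_eq_one_of_mem List.nodup_range (List.mem_range.2 ha)).symm
  · rw [List.count_eq_zero.2 (fun hc => ha (List.mem_range.1 hc))]
    apply List.sum_eq_zero
    intro x hx
    simp only [List.mem_map, Function.comp] at hx
    obtain ⟨m, hm, rfl⟩ := hx
    have hm' : m < n := by simpa using hm
    rw [List.count_eq_zero]
    intro hmem
    exact ha (mem_blk hπ hm' hmem).2

lemma sorted_foata (hπ : IsInvolution π) : List.Pairwise (rr π) (foataWord π) := by
  rw [foata_eq]
  show List.Pairwise (rr π) _
  rw [List.pairwise_flatten]
  constructor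
  · intro l hl
    obtain ⟨m, hm, rfl⟩ := List.mem_map.1 hl
    have hm' : m < n := by simpa using hm
    unfold blkF
    split_ifs with h1 h2
    · simp
    · refine List.pairwise_cons.2 ⟨?_, by simp⟩
      intro y hy
      simp only [List.mem_singleton] at hy
      subst hy
      right
      refine ⟨(mc_pv hπ hm').symm, le_of_lt h2⟩
    · simp
  · rw [List.pairwise_map, List.pairwise_reverse]
    refine List.Pairwise.imp_of_mem ?_ List.pairwise_lt_range
    intro a b ha hb hab x hx y hy
    have ha' : a < n := List.mem_range.1 ha
    have hb' : b < n := List.mem_range.1 hb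
    have hx' := mem_blk hπ hb' hx
    have hy' := mem_blk hπ ha' hy
    left
    rw [hx'.1, hy'.1]
    exact hab

/-! ### decoding a word into an involution -/

def dec (w : List ℕ) (v : ℕ) : ℕ :=
  if w.idxOf v + 1 < w.length ∧ w.getD (w.idxOf v) 0 < w.getD (w.idxOf v + 1) 0
    then w.getD (w.idxOf v + 1) 0
  else if 0 < w.idxOf v ∧ w.getD (w.idxOf v - 1) 0 < w.getD (w.idxOf v) 0
    then w.getD (w.idxOf v - 1) 0
  else v

lemma dec_lt (hw : w.Perm (List.range n)) {v : ℕ} (hv : v < n) : dec w v < n := by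
  unfold dec
  split_ifs with h1 h2
  · exact getD_lt_n hw (by rw [← len_w hw]; exact h1.1)
  · exact getD_lt_n hw (by have := indexOf_lt hw hv; omega)
  · exact hv

lemma dec_getD (hw : w.Perm (List.range n)) {p : ℕ} (hp : p < n) :
    dec w (w.getD p 0) =
      if p + 1 < n ∧ w.getD p 0 < w.getD (p + 1) 0 then w.getD (p + 1) 0
      else if 0 < p ∧ w.getD (p - 1) 0 < w.getD p 0 then w.getD (p - 1) 0
      else w.getD p 0 := by
  unfold dec
  rw [indexOf_getD hw hp, len_w hw]

lemma dec_dec (hw : w.Perm (List.range n)) (h123 : ¬ wContainsC123 w) {v : ℕ}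
    (hv : v < n) : dec w (dec w v) = v := by
  have hpn : w.idxOf v < n := indexOf_lt hw hv
  have hgv : w.getD (w.idxOf v) 0 = v := getD_indexOf hw hv
  set p := w.idxOf v with hp0
  by_cases hA1 : p + 1 < n ∧ w.getD p 0 < w.getD (p + 1) 0
  · have e1 : dec w v = w.getD (p + 1) 0 := by
      rw [← hgv, dec_getD hw hpn, if_pos hA1]
    rw [e1, dec_getD hw hA1.1]
    have hnA1 : ¬ (p + 1 + 1 < n ∧ w.getD (p + 1) 0 < w.getD (p + 1 + 1) 0) := by
      rintro ⟨ha, hb⟩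
      exact h123 ⟨p, by rw [len_w hw]; omega, hA1.2, hb⟩
    rw [if_neg hnA1, if_pos ⟨Nat.succ_pos p, by simpa using hA1.2⟩]
    simpa using hgv
  · by_cases hA2 : 0 < p ∧ w.getD (p - 1) 0 < w.getD p 0
    · have e1 : dec w v = w.getD (p - 1) 0 := by
        rw [← hgv, dec_getD hw hpn, if_neg hA1, if_pos hA2]
      have hp1 : p - 1 + 1 = p := by omega
      rw [e1, dec_getD hw (by omega)]
      rw [if_pos ⟨by omega, by rw [hp1]; exact hA2.2⟩, hp1, hgv]
    · have e1 : dec w v = v := by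
        rw [← hgv, dec_getD hw hpn, if_neg hA1, if_neg hA2, hgv]
      rw [e1, e1]

end FoataAux
end FoataAuxSec

open FoataAux in
private theorem foata_bijOn_aux (n : ℕ) :
    Set.BijOn (fun π : Equiv.Perm (Fin n) => foataWord π)
      {π : Equiv.Perm (Fin n) | IsInvolution π ∧ ¬ Contains3412 π}
      {w : List ℕ | IsPermWord n w ∧ ¬ wContains132 w ∧ ¬ wContainsC123 w} := by
  classical
  refine ⟨?_, ?_, ?_⟩
  · -- MapsTo
    rintro π ⟨hπ, h34⟩
    have hw' : (foataWord π).Perm (List.range n) := perm_foata hπ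
    have hs' := sorted_foata hπ
    refine ⟨hw', ?_, c123_not hπ hw' hs'⟩
    intro h132
    exact h34 ((cross_iff_3412 hπ).2 (cross_of_132 hπ hw' hs' h132))
  · -- InjOn
    rintro π ⟨hπ, -⟩ σ ⟨hσ, -⟩ heq
    simp only at heq
    apply Equiv.ext
    intro x
    have hwπ := perm_foata hπ
    have hsπ := sorted_foata hπ
    have hwσ := perm_foata hσ
    have hsσ := sorted_foata hσ
    have d1 := decode_eq hπ hwπ hsπ x.isLt
    have d2 := decode_eq hσ hwσ hsσ x.isLt
    rw [heq] at d1
    have h3 : pv π (x : ℕ) = pv σ (x : ℕ) := d1.trans d2.symm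
    rw [pv_def, pv_def] at h3
    exact Fin.ext h3
  · -- SurjOn
    rintro w ⟨hw, h132, h123⟩
    have hw' : w.Perm (List.range n) := hw
    have hf : Function.Involutive
        (fun v : Fin n => (⟨dec w v, dec_lt hw' v.isLt⟩ : Fin n)) := by
      intro x
      apply Fin.ext
      exact dec_dec hw' h123 x.isLt
    set π : Equiv.Perm (Fin n) := hf.toPerm _ with hπdef
    have hπinv : IsInvolution π := fun x => hf x
    have hpv : ∀ v : ℕ, v < n → pv π v = dec w v := by
      intro v hv
      have h1 : pv π v = ((π ⟨v, hv⟩ : Fin n) : ℕ) := by simp [pv, hv]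
      rw [h1]
      rfl
    have hmc : ∀ p, p < n → mc π (w.getD p 0) =
        (if p + 1 < n ∧ w.getD p 0 < w.getD (p + 1) 0 then w.getD p 0
         else if 0 < p ∧ w.getD (p - 1) 0 < w.getD p 0 then w.getD (p - 1) 0
         else w.getD p 0) := by
      intro p hp
      have hx : w.getD p 0 < n := getD_lt_n hw' hp
      have h0 : mc π (w.getD p 0) = min (w.getD p 0) (pv π (w.getD p 0)) := rfl
      rw [h0, hpv _ hx, dec_getD hw' hp]
      split_ifs with h1 h2
      · omega
      · omega
      · omega
    have hasc : ∀ p, p + 1 < n → w.getD p 0 < w.getD (p + 1) 0 →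
        mc π (w.getD (p + 1) 0) = mc π (w.getD p 0) := by
      intro p hp hlt
      rw [hmc (p + 1) hp, hmc p (by omega)]
      have hnA1 : ¬ (p + 1 + 1 < n ∧ w.getD (p + 1) 0 < w.getD (p + 1 + 1) 0) := by
        rintro ⟨ha, hb⟩
        exact h123 ⟨p, by rw [len_w hw']; omega, hlt, hb⟩
      rw [if_neg hnA1, if_pos ⟨Nat.succ_pos p, by simpa using hlt⟩, if_pos ⟨hp, hlt⟩]
      simp
    have hdesc : ∀ p, p + 1 < n → w.getD (p + 1) 0 < w.getD p 0 →
        mc π (w.getD (p + 1) 0) < mc π (w.getD p 0) := by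
      intro p hp hlt
      have hle : mc π (w.getD (p + 1) 0) ≤ w.getD (p + 1) 0 := mc_le π _
      rw [hmc p (by omega)]
      split_ifs with h1 h2
      · omega
      · have hne : p + 1 ≠ p - 1 := by omega
        have hneq : w.getD (p + 1) 0 ≠ w.getD (p - 1) 0 := by
          intro he
          exact hne (getD_inj hw' hp (by omega) he)
        have hn132 : ¬ (w.getD (p - 1) 0 < w.getD (p + 1) 0) := by
          intro hcon
          exact h132 ⟨p - 1, p, p + 1, by omega, by omega, by rw [len_w hw']; omega,
            hcon, hlt⟩
        omega
      · omega
    have hmono : ∀ d p, p + d < n → mc π (w.getD (p + d) 0) ≤ mc π (w.getD p 0) := by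
      intro d
      induction d with
      | zero => intro p h; simp
      | succ d ih =>
        intro p h
        have step : mc π (w.getD (p + d + 1) 0) ≤ mc π (w.getD (p + d) 0) := by
          rcases Nat.lt_trichotomy (w.getD (p + d) 0) (w.getD (p + d + 1) 0) with hl | he | hg
          · exact le_of_eq (hasc (p + d) (by omega) hl)
          · exact absurd (getD_inj hw' (by omega) (by omega) he) (by omega)
          · exact le_of_lt (hdesc (p + d) (by omega) hg)
        exact le_trans step (ih p (by omega))
    have hstrict : ∀ p q, p + 2 ≤ q → q < n → mc π (w.getD q 0) < mc π (w.getD p 0) := by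
      intro p q h2 hq
      have hstep : mc π (w.getD (p + 2) 0) < mc π (w.getD p 0) := by
        rcases Nat.lt_trichotomy (w.getD p 0) (w.getD (p + 1) 0) with hl | he | hg
        · rcases Nat.lt_trichotomy (w.getD (p + 1) 0) (w.getD (p + 2) 0) with h1 | h1 | h1
          · exact absurd (⟨p, by rw [len_w hw']; omega, hl, h1⟩ : wContainsC123 w) h123
          · exact absurd (getD_inj hw' (by omega) (by omega) h1) (by omega)
          · calc mc π (w.getD (p + 2) 0) < mc π (w.getD (p + 1) 0) :=
                  hdesc (p + 1) (by omega) h1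
              _ = mc π (w.getD p 0) := hasc p (by omega) hl
        · exact absurd (getD_inj hw' (by omega) (by omega) he) (by omega)
        · have h3 : mc π (w.getD (p + 2) 0) ≤ mc π (w.getD (p + 1) 0) := by
            have h4 := hmono 1 (p + 1) (by omega)
            exact h4
          exact lt_of_le_of_lt h3 (hdesc p (by omega) hg)
      have h4 : mc π (w.getD q 0) ≤ mc π (w.getD (p + 2) 0) := by
        have h5 := hmono (q - (p + 2)) (p + 2) (by omega)
        rw [show p + 2 + (q - (p + 2)) = q by omega] at h5
        exact h5
      omega
    have hsorted0 : List.Pairwise (rr π) w := by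
      refine List.pairwise_iff_getElem.2 ?_
      intro i j hi hj hij
      have hj' : j < n := by rw [← len_w hw']; exact hj
      have hi' : i < n := by omega
      rw [← List.getD_eq_getElem w 0 hi, ← List.getD_eq_getElem w 0 hj]
      rcases Nat.eq_or_lt_of_le (Nat.succ_le_of_lt hij) with he | hgt
      · rw [← he]
        rcases Nat.lt_trichotomy (w.getD i 0) (w.getD (i + 1) 0) with hl | heq | hg
        · exact Or.inr ⟨(hasc i (by omega) hl).symm, le_of_lt hl⟩
        · exact absurd (getD_inj hw' hi' (by omega) heq) (by omega)
        · exact Or.inl (hdesc i (by omega) hg)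
      · exact Or.inl (hstrict i j (by omega) hj')
    have hsorted : List.Pairwise (rr π) w := hsorted0
    haveI : Std.Antisymm (rr π) := ⟨fun a b h1 h2 => rr_antisymm π h1 h2⟩
    have heqw : foataWord π = w :=
      List.Perm.eq_of_pairwise' (sorted_foata hπinv) hsorted
        ((perm_foata hπinv).trans hw'.symm)
    refine ⟨π, ⟨hπinv, ?_⟩, heqw⟩
    intro h3412
    exact h132 (c132_of_cross hπinv hw' hsorted ((cross_iff_3412 hπinv).1 h3412))

/-- The Foata map `F` restricts to a bijection from the set
`I_n(3412)` of involutions of length `n` avoiding 3412 onto the set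
`S_n(132, 1̲2̲3̲)` of permutations (one-line words) avoiding the classical pattern
132 and the consecutive pattern 123. -/
theorem foata_bijOn (n : ℕ) :
    Set.BijOn (fun π : Equiv.Perm (Fin n) => foataWord π)
      {π : Equiv.Perm (Fin n) | IsInvolution π ∧ ¬ Contains3412 π}
      {w : List ℕ | IsPermWord n w ∧ ¬ wContains132 w ∧ ¬ wContainsC123 w} := by
  exact foata_bijOn_aux n
end

section
/- Let π ∈ I_n(3412). Then inv(π) = 2A − t, where A is the area between the Motzkin path Ψ(π) and the x-axis and t is the number of non-trivial tunnels of Ψ(π) (equivalently, t is the number of 2-cycles of π). -/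
open scoped Classical

section AuxProof

open Finset

private lemma count_take_ofFn {n : ℕ} (f : Fin n → Step) (c : Step) (i : ℕ) :
    ((List.ofFn f).take i).count c
      = ∑ v : Fin n, if (v : ℕ) < i ∧ f v = c then 1 else 0 := by
  induction i with
  | zero => simp
  | succ i ih =>
    by_cases hi : i < n
    · rw [List.take_succ]
      have hget : (List.ofFn f)[i]? = some (f ⟨i, hi⟩) := by
        rw [List.getElem?_eq_getElem (by simpa using hi)]
        simp
      rw [hget]
      simp only [Option.toList_some, List.count_append, ih]
      have h1 : (List.count c [f ⟨i, hi⟩]) = if f ⟨i, hi⟩ = c then 1 else 0 := by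
        simp [List.count_singleton]
      rw [h1]
      have h2 : ∀ v : Fin n, (if (v : ℕ) < i + 1 ∧ f v = c then 1 else 0)
          = (if (v : ℕ) < i ∧ f v = c then 1 else 0)
            + (if v = ⟨i, hi⟩ then (if f v = c then 1 else 0) else 0) := by
        intro v
        by_cases hv : v = ⟨i, hi⟩
        · subst hv; simp
        · have : (v : ℕ) ≠ i := fun h => hv (Fin.ext h)
          have h3 : ((v : ℕ) < i + 1 ↔ (v : ℕ) < i) := by omega
          by_cases hc : f v = c <;> simp [hv, hc, h3]
      rw [Finset.sum_congr rfl fun v _ => h2 v, Finset.sum_add_distrib]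
      simp [Finset.sum_ite_eq']
    · have hlen : (List.ofFn f).length ≤ i := by simp; omega
      rw [List.take_of_length_le hlen, List.take_of_length_le (le_trans hlen (Nat.le_succ i))] at *
      rw [ih]
      refine Finset.sum_congr rfl fun v _ => ?_
      have : (v : ℕ) < i ∧ (v:ℕ) < i + 1 := ⟨by omega, by have := v.isLt; omega⟩
      simp [this.1, this.2]

variable {n : ℕ} (π : Equiv.Perm (Fin n))

private lemma countU_take (i : ℕ) :
    ((psiWord π).take i).count Step.U
      = ∑ v : Fin n, if (v : ℕ) < i ∧ (v : ℕ) < (π v : ℕ) then 1 else 0 := by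
  rw [psiWord, count_take_ofFn]
  refine Finset.sum_congr rfl fun v _ => ?_
  congr 1
  have hlt : v < π v ↔ (v : ℕ) < (π v : ℕ) := Iff.rfl
  by_cases h0 : π v = v
  · have : ¬ (v : ℕ) < (π v : ℕ) := by rw [h0]; omega
    simp [h0, this]
  · by_cases h1 : v < π v <;> simp [h0, h1, hlt.symm.trans Iff.rfl]

private lemma countD_take (i : ℕ) :
    ((psiWord π).take i).count Step.D
      = ∑ v : Fin n, if (v : ℕ) < i ∧ (π v : ℕ) < (v : ℕ) then 1 else 0 := by
  rw [psiWord, count_take_ofFn]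
  refine Finset.sum_congr rfl fun v _ => ?_
  congr 1
  by_cases h0 : π v = v
  · have : ¬ (π v : ℕ) < (v : ℕ) := by rw [h0]; omega
    simp [h0, this]
  · by_cases h1 : v < π v
    · have : ¬ (π v : ℕ) < (v : ℕ) := by
        have := (Fin.lt_def).mp h1; omega
      simp [h0, h1, this]
    · have h2 : (π v : ℕ) < (v : ℕ) := by
        have hne : (π v : ℕ) ≠ (v : ℕ) := fun h => h0 (Fin.ext h)
        have := fun h => h1 (Fin.lt_def.mpr h); omega
      simp [h0, h1, h2]

private lemma levelAt_psi (h₁ : IsInvolution π) (i : ℕ) :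
    levelAt (psiWord π) i
      = ∑ v : Fin n, if (v : ℕ) < (π v : ℕ) ∧ (v : ℕ) < i ∧ i ≤ (π v : ℕ) then 1 else 0 := by
  rw [levelAt, countU_take, countD_take]
  have hsplit : (∑ v : Fin n, if (v : ℕ) < i ∧ (v : ℕ) < (π v : ℕ) then 1 else 0)
      = (∑ v : Fin n, if (v : ℕ) < (π v : ℕ) ∧ (π v : ℕ) < i then 1 else 0)
        + ∑ v : Fin n, if (v : ℕ) < (π v : ℕ) ∧ (v : ℕ) < i ∧ i ≤ (π v : ℕ) then 1 else 0 := by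
    rw [← Finset.sum_add_distrib]
    refine Finset.sum_congr rfl fun v _ => ?_
    by_cases h1 : (v : ℕ) < (π v : ℕ)
    · by_cases h2 : (π v : ℕ) < i
      · have h3 : (v:ℕ) < i := by omega
        have h4 : ¬ i ≤ (π v : ℕ) := by omega
        simp [h1, h2, h3, h4]
      · have h4 : i ≤ (π v : ℕ) := by omega
        by_cases h3 : (v:ℕ) < i <;> simp [h1, h2, h3, h4]
    · simp [h1]
  have himg : (∑ v : Fin n, if (v : ℕ) < (π v : ℕ) ∧ (π v : ℕ) < i then 1 else 0)
      = ∑ v : Fin n, if (v : ℕ) < i ∧ (π v : ℕ) < (v : ℕ) then 1 else 0 := by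
    have hc := Equiv.sum_comp π (fun w : Fin n => if (π w : ℕ) < (w : ℕ) ∧ (w : ℕ) < i then 1 else 0)
    have hL : (∑ v : Fin n, if ((π (π v) : ℕ) < (π v : ℕ) ∧ (π v : ℕ) < i) then 1 else 0)
        = ∑ v : Fin n, if ((v : ℕ) < (π v : ℕ) ∧ (π v : ℕ) < i) then 1 else 0 :=
      Finset.sum_congr rfl fun v _ => by rw [h₁ v]
    have hR : (∑ w : Fin n, if ((π w : ℕ) < (w : ℕ) ∧ (w : ℕ) < i) then 1 else 0)
        = ∑ w : Fin n, if ((w : ℕ) < i ∧ (π w : ℕ) < (w : ℕ)) then 1 else 0 :=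
      Finset.sum_congr rfl fun w _ => if_congr and_comm rfl rfl
    rw [← hL, hc, hR]
  rw [hsplit, himg.symm]
  omega

private lemma twoArea_psi (h₁ : IsInvolution π) :
    twoArea (psiWord π)
      = ∑ v : Fin n, if (v : ℕ) < (π v : ℕ) then 2 * ((π v : ℕ) - (v : ℕ)) else 0 := by
  have hlen : (psiWord π).length = n := by simp [psiWord]
  rw [twoArea, hlen]
  have : ∀ i ∈ Finset.range n,
      levelAt (psiWord π) i + levelAt (psiWord π) (i+1)
        = ∑ v : Fin n, ((if (v : ℕ) < (π v : ℕ) ∧ (v : ℕ) < i ∧ i ≤ (π v : ℕ) then 1 else 0)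
            + (if (v : ℕ) < (π v : ℕ) ∧ (v : ℕ) < i + 1 ∧ i + 1 ≤ (π v : ℕ) then 1 else 0)) := by
    intro i _
    rw [levelAt_psi π h₁ i, levelAt_psi π h₁ (i+1), Finset.sum_add_distrib]
  rw [Finset.sum_congr rfl this, Finset.sum_comm]
  refine Finset.sum_congr rfl fun v _ => ?_
  by_cases hv : (v : ℕ) < (π v : ℕ)
  · have hb : (π v : ℕ) < n := (π v).isLt
    have e1 : (∑ i ∈ Finset.range n, if (v : ℕ) < (π v : ℕ) ∧ (v : ℕ) < i ∧ i ≤ (π v : ℕ) then 1 else 0)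
        = (π v : ℕ) - (v : ℕ) := by
      rw [← Finset.card_filter]
      have : Finset.filter (fun i => (v : ℕ) < (π v : ℕ) ∧ (v : ℕ) < i ∧ i ≤ (π v : ℕ)) (Finset.range n)
          = Finset.Ico ((v : ℕ) + 1) ((π v : ℕ) + 1) := by
        ext i
        simp only [Finset.mem_filter, Finset.mem_range, Finset.mem_Ico]
        omega
      rw [this, Nat.card_Ico]
      omega
    have e2 : (∑ i ∈ Finset.range n, if (v : ℕ) < (π v : ℕ) ∧ (v : ℕ) < i + 1 ∧ i + 1 ≤ (π v : ℕ) then 1 else 0)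
        = (π v : ℕ) - (v : ℕ) := by
      rw [← Finset.card_filter]
      have : Finset.filter (fun i => (v : ℕ) < (π v : ℕ) ∧ (v : ℕ) < i + 1 ∧ i + 1 ≤ (π v : ℕ)) (Finset.range n)
          = Finset.Ico (v : ℕ) (π v : ℕ) := by
        ext i
        simp only [Finset.mem_filter, Finset.mem_range, Finset.mem_Ico]
        omega
      rw [this, Nat.card_Ico]
    rw [Finset.sum_add_distrib, e1, e2, if_pos hv]
    omega
  · simp [hv]

private lemma no_cross (h₁ : IsInvolution π) (h₂ : ¬ Contains3412 π)
    {a c : Fin n} (hac : a < c) (hca : c < π a) (hπ : π a < π c) : False := by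
  apply h₂
  refine ⟨a, c, π a, π c, hac, hca, hπ, ?_, ?_, ?_⟩
  · rw [h₁, h₁]; exact hac
  · rw [h₁]; exact hca
  · exact hπ

private lemma classify (h₁ : IsInvolution π) (h₂ : ¬ Contains3412 π) (i j : Fin n) :
    (if i < j ∧ π j < π i then (1:ℕ) else 0) =
    ((if i < j ∧ j = π i then 1 else 0)
      + (if (i:ℕ) < (j:ℕ) ∧ (j:ℕ) < (π i : ℕ) then 1 else 0))
      + (if (π j : ℕ) < (i:ℕ) ∧ (i:ℕ) < (j:ℕ) then 1 else 0) := by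
  by_cases hij : i < j
  · have hijv : (i:ℕ) < (j:ℕ) := hij
    rcases lt_trichotomy ((j:ℕ)) ((π i : ℕ)) with h | h | h
    · -- A holds
      have hinv : π j < π i := by
        by_contra hn
        have hne : π i ≠ π j := fun e => absurd (π.injective e) (ne_of_lt hij)
        have hlt : π i < π j := lt_of_le_of_ne (not_lt.mp hn) hne
        exact no_cross π h₁ h₂ hij (Fin.lt_def.mpr h) hlt
      have hC : ¬ j = π i := fun e => by rw [e] at h; omega
      have hB : ¬ ((π j : ℕ) < (i:ℕ)) := by
        intro hb
        refine no_cross π h₁ h₂ (a := π j) (c := i) (Fin.lt_def.mpr hb) ?_ ?_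
        · rw [h₁]; exact hij
        · rw [h₁]; exact Fin.lt_def.mpr h
      simp [hij, hinv, hijv, h, hC, hB]
    · -- C holds
      have hje : j = π i := Fin.ext h
      have hpj : π j = i := by rw [hje, h₁]
      have hinv : π j < π i := by rw [hpj, ← hje]; exact hij
      have hA : ¬ (j:ℕ) < (π i : ℕ) := by omega
      have hB : ¬ ((π j : ℕ) < (i:ℕ)) := by rw [hpj]; omega
      rw [if_pos ⟨hij, hinv⟩, if_pos ⟨hij, hje⟩, if_neg (fun h' => hA h'.2),
        if_neg (fun h' => hB h'.1)]
    · -- π i < j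
      by_cases hinv : π j < π i
      · have hb : (π j : ℕ) < (i:ℕ) := by
          rcases lt_trichotomy ((π j : ℕ)) ((i:ℕ)) with h' | h' | h'
          · exact h'
          · exfalso
            have : π j = i := Fin.ext h'
            have : j = π i := by rw [← this, h₁]
            rw [this] at hijv h
            omega
          · exact (no_cross π h₁ h₂ (a := i) (c := π j) (Fin.lt_def.mpr h') hinv
              (by rw [h₁]; exact Fin.lt_def.mpr h)).elim
        have hA : ¬ (j:ℕ) < (π i : ℕ) := by omega
        have hC : ¬ j = π i := fun e => by rw [e] at h; omega
        have hinvv := Fin.lt_def.mp hinv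
        simp [hij, hinv, hijv, hA, hC, hb]
      · have hb : ¬ (π j : ℕ) < (i:ℕ) := by
          intro hb'
          have hne : π i ≠ π j := fun e => absurd (π.injective e) (ne_of_lt hij)
          have hle : π i < π j := lt_of_le_of_ne (not_lt.mp hinv) hne
          refine no_cross π h₁ h₂ (a := π i) (c := π j) hle ?_ ?_
          · rw [h₁]; exact Fin.lt_def.mpr hb'
          · rw [h₁, h₁]; exact hij
        have hA : ¬ (j:ℕ) < (π i : ℕ) := by omega
        have hC : ¬ j = π i := fun e => by rw [e] at h; omega
        simp [hij, hinv, hA, hC, hb]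
  · have hv : ¬ (i:ℕ) < (j:ℕ) := fun h => hij (Fin.lt_def.mpr h)
    simp [hij, hv]

private lemma invCount_eq (h₁ : IsInvolution π) (h₂ : ¬ Contains3412 π) :
    invCount π = (∑ v : Fin n, if (v:ℕ) < (π v : ℕ) then 1 else 0)
      + (∑ v : Fin n, ((π v : ℕ) - (v:ℕ) - 1))
      + (∑ v : Fin n, ((π v : ℕ) - (v:ℕ) - 1)) := by
  rw [invCount, Finset.card_filter, ← Finset.univ_product_univ, Finset.sum_product]
  have step1 : (∑ i : Fin n, ∑ j : Fin n, if i < j ∧ π j < π i then (1:ℕ) else 0)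
      = (∑ i : Fin n, ∑ j : Fin n,
          (((if i < j ∧ j = π i then 1 else 0)
            + (if (i:ℕ) < (j:ℕ) ∧ (j:ℕ) < (π i : ℕ) then 1 else 0))
            + (if (π j : ℕ) < (i:ℕ) ∧ (i:ℕ) < (j:ℕ) then 1 else 0))) :=
    Finset.sum_congr rfl fun i _ => Finset.sum_congr rfl fun j _ => classify π h₁ h₂ i j
  rw [step1]
  simp only [Finset.sum_add_distrib]
  congr 1
  · congr 1
    · -- C sum
      refine Finset.sum_congr rfl fun i _ => ?_
      have hpt : ∀ j : Fin n, (if i < j ∧ j = π i then (1:ℕ) else 0)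
          = (if j = π i then (if (i:ℕ) < (π i : ℕ) then 1 else 0) else 0) := by
        intro j
        by_cases hj : j = π i
        · subst hj
          have hiff : (i < π i ∧ π i = π i) ↔ ((i:ℕ) < (π i : ℕ)) :=
            ⟨fun h => h.1, fun h => ⟨h, rfl⟩⟩
          rw [if_congr hiff rfl rfl, if_pos rfl]
        · simp [hj]
      rw [Finset.sum_congr rfl fun j _ => hpt j]
      simp [Finset.sum_ite_eq']
    · -- A sum
      refine Finset.sum_congr rfl fun i _ => ?_
      rw [Fin.sum_univ_eq_sum_range (fun x => if (i:ℕ) < x ∧ x < (π i : ℕ) then (1:ℕ) else 0) n,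
        ← Finset.card_filter]
      have : Finset.filter (fun x => (i:ℕ) < x ∧ x < (π i : ℕ)) (Finset.range n)
          = Finset.Ico ((i:ℕ)+1) ((π i : ℕ)) := by
        ext x
        have := (π i).isLt
        simp only [Finset.mem_filter, Finset.mem_range, Finset.mem_Ico]
        omega
      rw [this, Nat.card_Ico]
      omega
  · -- B sum
    rw [Finset.sum_comm]
    have inner : ∀ j : Fin n, (∑ i : Fin n, if (π j : ℕ) < (i:ℕ) ∧ (i:ℕ) < (j:ℕ) then (1:ℕ) else 0)
        = (j:ℕ) - (π j : ℕ) - 1 := by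
      intro j
      rw [Fin.sum_univ_eq_sum_range (fun x => if (π j : ℕ) < x ∧ x < (j:ℕ) then (1:ℕ) else 0) n,
        ← Finset.card_filter]
      have : Finset.filter (fun x => (π j : ℕ) < x ∧ x < (j:ℕ)) (Finset.range n)
          = Finset.Ico ((π j : ℕ)+1) ((j:ℕ)) := by
        ext x
        have := j.isLt
        simp only [Finset.mem_filter, Finset.mem_range, Finset.mem_Ico]
        omega
      rw [this, Nat.card_Ico]
      omega
    rw [Finset.sum_congr rfl fun j _ => inner j]
    have hc := Equiv.sum_comp π (fun w : Fin n => (w:ℕ) - (π w : ℕ) - 1)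
    rw [← hc]
    refine Finset.sum_congr rfl fun v _ => ?_
    rw [h₁ v]

end AuxProof

/-- For `π ∈ I_n(3412)`: `inv(π) = 2A − t`, where `A` is the area
between the Motzkin path `Ψ(π)` and the x-axis (so `twoArea (psiWord π) = 2A`) and
`t` is the number of non-trivial tunnels of `Ψ(π)`, i.e. its number of up steps. -/
theorem inv_eq_twoArea_sub_tunnels (n : ℕ) (π : Equiv.Perm (Fin n))
    (h₁ : IsInvolution π) (h₂ : ¬ Contains3412 π) :
    invCount π + (psiWord π).count Step.U = twoArea (psiWord π) := by
  have hlen : (psiWord π).length = n := by simp [psiWord]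
  have hcount : (psiWord π).count Step.U
      = ∑ v : Fin n, if (v:ℕ) < (π v : ℕ) then 1 else 0 := by
    have htake : (psiWord π).take n = psiWord π := by
      exact List.take_of_length_le (le_of_eq hlen)
    rw [← htake, countU_take]
    refine Finset.sum_congr rfl fun v _ => ?_
    have hv : (v:ℕ) < n := v.isLt
    simp [hv]
  rw [hcount, invCount_eq π h₁ h₂, twoArea_psi π h₁,
    ← Finset.sum_add_distrib, ← Finset.sum_add_distrib, ← Finset.sum_add_distrib]
  refine Finset.sum_congr rfl fun v _ => ?_
  by_cases h : (v:ℕ) < (π v : ℕ) <;> simp [h] <;> omega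
end

section
/- Let π ∈ I_n(3412). Then for every index 1 ≤ i ≤ n−1, π has a descent at i (i.e. π_i > π_{i+1}) if and only if the two-letter factor of Ψ(π) at positions i, i+1 is one of UU, DD, UH, HD, UD. Consequently des(π) equals the total number of occurrences of the factors UU, DD, UH, HD, UD in Ψ(π). -/
open scoped Classical

lemma psiWord_length {n : ℕ} (π : Equiv.Perm (Fin n)) : (psiWord π).length = n := by
  simp [psiWord]

lemma take_two_drop {n : ℕ} (π : Equiv.Perm (Fin n)) (i : ℕ) (hi : i + 1 < n) :
    ((psiWord π).drop i).take 2 =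
      [(if π ⟨i, by omega⟩ = ⟨i, by omega⟩ then Step.H
        else if (⟨i, by omega⟩ : Fin n) < π ⟨i, by omega⟩ then Step.U else Step.D),
       (if π ⟨i+1, hi⟩ = ⟨i+1, hi⟩ then Step.H
        else if (⟨i+1, hi⟩ : Fin n) < π ⟨i+1, hi⟩ then Step.U else Step.D)] := by
  have h1 : i < (psiWord π).length := by rw [psiWord_length]; omega
  have h2 : i + 1 < (psiWord π).length := by rw [psiWord_length]; omega
  rw [List.drop_eq_getElem_cons h1, List.drop_eq_getElem_cons h2]
  simp only [List.take_succ_cons, List.take_zero]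
  congr 1
  · simp [psiWord]
  · congr 1
    simp [psiWord]

lemma descent_iff_aux {n : ℕ} (π : Equiv.Perm (Fin n))
    (h₁ : IsInvolution π) (h₂ : ¬ Contains3412 π) (i : ℕ) (hi : i + 1 < n) :
    (pv π (i + 1) < pv π i ↔
      ((psiWord π).drop i).take 2 ∈
        [[Step.U, Step.U], [Step.D, Step.D], [Step.U, Step.H],
          [Step.H, Step.D], [Step.U, Step.D]]) := by
  have hin : i < n := by omega
  set I : Fin n := ⟨i, hin⟩ with hIdef
  set J : Fin n := ⟨i+1, hi⟩ with hJdef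
  have hIv : (I : ℕ) = i := rfl
  have hJv : (J : ℕ) = i + 1 := rfl
  have hpv : (pv π (i+1) < pv π i) ↔ ((π J : Fin n) : ℕ) < ((π I : Fin n) : ℕ) := by
    unfold pv
    rw [dif_pos hi, dif_pos hin]
  rw [hpv, take_two_drop π i hi]
  have hIJ : I < J := by rw [Fin.lt_def, hIv, hJv]; omega
  have hIJne : I ≠ J := ne_of_lt hIJ
  rcases lt_trichotomy (π I) I with hI | hI | hI <;>
    rcases lt_trichotomy (π J) J with hJ | hJ | hJ
  · -- DD : π I < I, π J < J
    rw [if_neg hI.ne, if_neg (not_lt.mpr hI.le), if_neg hJ.ne, if_neg (not_lt.mpr hJ.le)]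
    refine iff_of_true ?_ (by decide)
    have haI : ((π I : Fin n) : ℕ) < i := by have := Fin.lt_def.mp hI; omega
    have hbJ : ((π J : Fin n) : ℕ) < i + 1 := by have := Fin.lt_def.mp hJ; omega
    have hne : π J ≠ I := by
      intro h
      have h' := h₁ J
      rw [h] at h'
      have : (I : ℕ) < (π I : Fin n).val := by rw [h', hJv, hIv]; omega
      omega
    have hbne : ((π J : Fin n) : ℕ) ≠ i := fun h => hne (Fin.ext (h.trans hIv.symm))
    by_contra hc
    push_neg at hc
    have hne2 : π I ≠ π J := fun h => hIJne (π.injective h)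
    have hlt : π I < π J := by
      rw [Fin.lt_def]
      rcases lt_or_eq_of_le hc with h | h
      · exact h
      · exact absurd (Fin.ext h) hne2
    have hJI : π J < I := by rw [Fin.lt_def, hIv]; omega
    exact h₂ ⟨π I, π J, I, J, hlt, hJI, hIJ,
      by rw [h₁ I, h₁ J]; exact ⟨hlt, hJI, hIJ⟩⟩
  · -- DH
    rw [if_neg hI.ne, if_neg (not_lt.mpr hI.le), if_pos hJ]
    refine iff_of_false ?_ (by decide)
    push_neg
    have haI : ((π I : Fin n) : ℕ) < i := by have := Fin.lt_def.mp hI; omega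
    have hbJ : ((π J : Fin n) : ℕ) = i + 1 := by rw [hJ]
    omega
  · -- DU
    rw [if_neg hI.ne, if_neg (not_lt.mpr hI.le), if_neg hJ.ne', if_pos hJ]
    refine iff_of_false ?_ (by decide)
    push_neg
    have haI : ((π I : Fin n) : ℕ) < i := by have := Fin.lt_def.mp hI; omega
    have hbJ : i + 1 < ((π J : Fin n) : ℕ) := by have := Fin.lt_def.mp hJ; omega
    omega
  · -- HD
    rw [if_pos hI, if_neg hJ.ne, if_neg (not_lt.mpr hJ.le)]
    refine iff_of_true ?_ (by decide)
    have haI : ((π I : Fin n) : ℕ) = i := by rw [hI]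
    have hbJ : ((π J : Fin n) : ℕ) < i + 1 := by have := Fin.lt_def.mp hJ; omega
    have hne : π J ≠ I := by
      intro h
      have h' := h₁ J
      rw [h, hI] at h'
      exact hIJne h'
    have hbne : ((π J : Fin n) : ℕ) ≠ i := fun h => hne (Fin.ext (h.trans hIv.symm))
    omega
  · -- HH
    rw [if_pos hI, if_pos hJ]
    refine iff_of_false ?_ (by decide)
    push_neg
    have haI : ((π I : Fin n) : ℕ) = i := by rw [hI]
    have hbJ : ((π J : Fin n) : ℕ) = i + 1 := by rw [hJ]
    omega
  · -- HU
    rw [if_pos hI, if_neg hJ.ne', if_pos hJ]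
    refine iff_of_false ?_ (by decide)
    push_neg
    have haI : ((π I : Fin n) : ℕ) = i := by rw [hI]
    have hbJ : i + 1 < ((π J : Fin n) : ℕ) := by have := Fin.lt_def.mp hJ; omega
    omega
  · -- UD
    rw [if_neg hI.ne', if_pos hI, if_neg hJ.ne, if_neg (not_lt.mpr hJ.le)]
    refine iff_of_true ?_ (by decide)
    have haI : i < ((π I : Fin n) : ℕ) := by have := Fin.lt_def.mp hI; omega
    have hbJ : ((π J : Fin n) : ℕ) < i + 1 := by have := Fin.lt_def.mp hJ; omega
    omega
  · -- UH
    rw [if_neg hI.ne', if_pos hI, if_pos hJ]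
    refine iff_of_true ?_ (by decide)
    have haI : i < ((π I : Fin n) : ℕ) := by have := Fin.lt_def.mp hI; omega
    have hbJ : ((π J : Fin n) : ℕ) = i + 1 := by rw [hJ]
    have hne : π I ≠ J := by
      intro h
      have h' := h₁ I
      rw [h, hJ] at h'
      exact hIJne h'.symm
    have hane : ((π I : Fin n) : ℕ) ≠ i + 1 := fun h => hne (Fin.ext (h.trans hJv.symm))
    omega
  · -- UU
    rw [if_neg hI.ne', if_pos hI, if_neg hJ.ne', if_pos hJ]
    refine iff_of_true ?_ (by decide)
    have haI : i < ((π I : Fin n) : ℕ) := by have := Fin.lt_def.mp hI; omega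
    have hbJ : i + 1 < ((π J : Fin n) : ℕ) := by have := Fin.lt_def.mp hJ; omega
    have hne : π I ≠ J := by
      intro h
      have h' := h₁ I
      rw [h] at h'
      have : (J : ℕ) < (π J : Fin n).val := by rw [h', hIv, hJv]; omega
      omega
    have hane : ((π I : Fin n) : ℕ) ≠ i + 1 := fun h => hne (Fin.ext (h.trans hJv.symm))
    have hJI : J < π I := by rw [Fin.lt_def, hJv]; omega
    by_contra hc
    push_neg at hc
    have hne2 : π I ≠ π J := fun h => hIJne (π.injective h)
    have hlt : π I < π J := by
      rw [Fin.lt_def]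
      rcases lt_or_eq_of_le hc with h | h
      · exact h
      · exact absurd (Fin.ext h) hne2
    exact h₂ ⟨I, J, π I, π J, hIJ, hJI, hlt, by rw [h₁ I, h₁ J]; exact ⟨hIJ, hJI, hlt⟩⟩

lemma occFactor_two {n : ℕ} (π : Equiv.Perm (Fin n)) (p : List Step) (hp : p.length = 2) :
    occFactor p (psiWord π) =
      ((Finset.range (n-1)).filter fun i => ((psiWord π).drop i).take 2 = p).card := by
  unfold occFactor
  rw [psiWord_length]
  congr 1
  ext j
  simp only [Finset.mem_filter, Finset.mem_range]
  constructor
  · rintro ⟨hj, hpre⟩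
    have he := List.prefix_iff_eq_take.mp hpre
    rw [hp] at he
    have hl : (((psiWord π).drop j).take 2).length = 2 := by rw [← he, hp]
    rw [List.length_take, List.length_drop, psiWord_length] at hl
    exact ⟨by omega, he.symm⟩
  · rintro ⟨hj, he⟩
    exact ⟨by omega, List.prefix_iff_eq_take.mpr (by rw [hp, he])⟩

theorem descent_iff_factor' (n : ℕ) (π : Equiv.Perm (Fin n))
    (h₁ : IsInvolution π) (h₂ : ¬ Contains3412 π) :
    desCount π =
      occFactor [Step.U, Step.U] (psiWord π) + occFactor [Step.D, Step.D] (psiWord π) +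
      occFactor [Step.U, Step.H] (psiWord π) + occFactor [Step.H, Step.D] (psiWord π) +
      occFactor [Step.U, Step.D] (psiWord π) := by
  rw [occFactor_two π [Step.U, Step.U] rfl, occFactor_two π [Step.D, Step.D] rfl,
    occFactor_two π [Step.U, Step.H] rfl, occFactor_two π [Step.H, Step.D] rfl,
    occFactor_two π [Step.U, Step.D] rfl]
  unfold desCount
  rw [Finset.card_filter, Finset.card_filter, Finset.card_filter, Finset.card_filter,
    Finset.card_filter, Finset.card_filter, ← Finset.sum_add_distrib,
    ← Finset.sum_add_distrib, ← Finset.sum_add_distrib, ← Finset.sum_add_distrib]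
  refine Finset.sum_congr rfl fun i hi => ?_
  rw [Finset.mem_range] at hi
  have hi' : i + 1 < n := by omega
  have hiff := descent_iff_aux π h₁ h₂ i hi'
  by_cases hd : pv π (i + 1) < pv π i
  · have hm := hiff.mp hd
    rw [if_pos hd]
    simp only [List.mem_cons, List.not_mem_nil, or_false] at hm
    rcases hm with h | h | h | h | h <;> rw [h] <;> decide
  · rw [if_neg hd]
    have hm : ((psiWord π).drop i).take 2 ∉
        [[Step.U, Step.U], [Step.D, Step.D], [Step.U, Step.H],
          [Step.H, Step.D], [Step.U, Step.D]] := fun h => hd (hiff.mpr h)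
    simp only [List.mem_cons, List.not_mem_nil, or_false, not_or] at hm
    rw [if_neg hm.1, if_neg hm.2.1, if_neg hm.2.2.1, if_neg hm.2.2.2.1, if_neg hm.2.2.2.2]

/-- For `π ∈ I_n(3412)`: `π` has a descent at `i` if and only if
the two-letter factor of `Ψ(π)` at positions `i, i+1` is one of `UU, DD, UH, HD, UD`;
consequently `des(π)` is the total number of occurrences of these five factors. -/
theorem descent_iff_factor (n : ℕ) (π : Equiv.Perm (Fin n))
    (h₁ : IsInvolution π) (h₂ : ¬ Contains3412 π) :
    (∀ i : ℕ, i + 1 < n →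
      (pv π (i + 1) < pv π i ↔
        ((psiWord π).drop i).take 2 ∈
          [[Step.U, Step.U], [Step.D, Step.D], [Step.U, Step.H],
            [Step.H, Step.D], [Step.U, Step.D]])) ∧
    desCount π =
      occFactor [Step.U, Step.U] (psiWord π) + occFactor [Step.D, Step.D] (psiWord π) +
      occFactor [Step.U, Step.H] (psiWord π) + occFactor [Step.H, Step.D] (psiWord π) +
      occFactor [Step.U, Step.D] (psiWord π) := by
  exact ⟨fun i hi => descent_iff_aux π h₁ h₂ i hi, descent_iff_factor' n π h₁ h₂⟩
end
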